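/- arXiv:1610.02965 — 11 statements merged into one kernel-verified Lean document; each statement's English description precedes it below -/
import Mathlib

section
/- For nonnegative integers n, k with 0 ≤ k ≤ n, the unsigned Stirling number of the first kind satisfies S1(n,k) = (-1)^{n-k} · Σ_{j=0}^{n-k} (-1)^j · C(n-1+j, n-k+j) · C(2n-k, n-k-j) · S2(n-k+j, j), where S2 denotes the Stirling number of the second kind. -/
open Polynomial Finset

/-- Unsigned Stirling numbers of the first kind. -/
def S1 : ℕ → ℕ → ℕ
  | 0, 0 => 1
  | 0, _ + 1 => 0
  | _ + 1, 0 => 0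
  | n + 1, k + 1 => n * S1 n (k + 1) + S1 n k

/-- Stirling numbers of the second kind. -/
def S2 : ℕ → ℕ → ℕ
  | 0, 0 => 1
  | 0, _ + 1 => 0
  | _ + 1, 0 => 0
  | n + 1, k + 1 => (k + 1) * S2 n (k + 1) + S2 n k

lemma S1_big {n k : ℕ} (h : n < k) : S1 n k = 0 := by
  induction n generalizing k with
  | zero => cases k with
    | zero => omega
    | succ t => rfl
  | succ n ih =>
    cases k with
    | zero => omega
    | succ k =>
      show n * S1 n (k+1) + S1 n k = 0
      rw [ih (by omega), ih (by omega)]; ring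

lemma S2_big {n k : ℕ} (h : n < k) : S2 n k = 0 := by
  induction n generalizing k with
  | zero => cases k with
    | zero => omega
    | succ t => rfl
  | succ n ih =>
    cases k with
    | zero => omega
    | succ k =>
      show (k+1) * S2 n (k+1) + S2 n k = 0
      rw [ih (by omega), ih (by omega)]; ring

lemma S1_self (n : ℕ) : S1 n n = 1 := by
  induction n with
  | zero => rfl
  | succ n ih =>
    show n * S1 n (n+1) + S1 n n = 1
    rw [ih, S1_big (by omega)]; ring

lemma S2_self (n : ℕ) : S2 n n = 1 := by
  induction n with
  | zero => rfl
  | succ n ih =>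
    show (n+1) * S2 n (n+1) + S2 n n = 1
    rw [ih, S2_big (by omega)]; ring

lemma S1_zero (n : ℕ) : S1 (n + 1) 0 = 0 := rfl

lemma exists_antideriv (p : ℚ[X]) : ∃ q : ℚ[X], q.natDegree ≤ p.natDegree + 1 ∧
    q.eval 0 = 0 ∧ ∀ x : ℚ, q.eval (x + 1) - q.eval x = p.eval x := by
  classical
  set d := p.natDegree with hd
  set s : Finset ℕ := Finset.range (d + 2) with hs
  set v : ℕ → ℚ := fun i => (i : ℚ) with hv
  have hinj : Set.InjOn v s := fun a _ b _ h => Nat.cast_injective h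
  set r : ℕ → ℚ := fun i => ∑ t ∈ Finset.range i, p.eval (t : ℚ) with hr
  set q : ℚ[X] := Lagrange.interpolate s v r with hq
  have hqd : q.degree < (d + 2 : ℕ) := by
    have := Lagrange.degree_interpolate_lt r hinj
    exact lt_of_lt_of_eq this (by simp [hs])
  have hqnd : q.natDegree ≤ d + 1 := by
    rcases eq_or_ne q 0 with h | h
    · simp [h]
    · have := (Polynomial.degree_eq_natDegree h) ▸ hqd
      exact_mod_cast Nat.lt_succ_iff.mp (by exact_mod_cast this)
  have hnode : ∀ i ∈ s, q.eval (i : ℚ) = r i := fun i hi =>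
    Lagrange.eval_interpolate_at_node r hinj hi
  refine ⟨q, hqnd, ?_, ?_⟩
  · have := hnode 0 (by simp [hs])
    simpa [hr] using this
  · set qc : ℚ[X] := q.comp (X + C 1) with hqc
    set e : ℚ[X] := qc - q - p with he
    have hroots : ∀ i : ℕ, i < d + 1 → e.eval (i : ℚ) = 0 := by
      intro i hi
      have hi1 : i ∈ s := by simp [hs]; omega
      have hi2 : i + 1 ∈ s := by simp [hs]; omega
      have e1 := hnode i hi1
      have e2 := hnode (i + 1) hi2
      simp only [he, hqc, eval_sub, eval_comp, eval_add, eval_X, eval_C]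
      rw [show ((i : ℚ) + 1) = ((i + 1 : ℕ) : ℚ) by push_cast; ring, e1, e2]
      simp [hr, Finset.sum_range_succ]
    have hcomp : (qc - q).natDegree ≤ d := by
      rcases Nat.eq_zero_or_pos q.natDegree with h0 | h0
      · have hqq : q = C (q.coeff 0) := Polynomial.eq_C_of_natDegree_eq_zero h0
        have : qc = q := by rw [hqc]; conv_lhs => rw [hqq]; rw [Polynomial.C_comp]; exact hqq.symm
        simp [this]
      have hq0 : q ≠ 0 := fun hzz => by simp [hzz] at h0
      have nd1 : (X + 1 : ℚ[X]).natDegree = 1 := by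
        simpa using Polynomial.natDegree_X_add_C (1 : ℚ)
      have m1 : (X + 1 : ℚ[X]).Monic := by simpa using Polynomial.monic_X_add_C (1 : ℚ)
      have hndc : qc.natDegree = q.natDegree := by
        rw [hqc, Polynomial.natDegree_comp]
        simp [nd1]
      have hlc : qc.leadingCoeff = q.leadingCoeff := by
        rw [hqc, Polynomial.leadingCoeff_comp (by simp [nd1])]
        simp [m1.leadingCoeff]
      have hqc0 : qc ≠ 0 := by
        intro hzz
        rw [hzz] at hlc
        exact hq0 (Polynomial.leadingCoeff_eq_zero.mp hlc.symm)
      have hdeq : qc.degree = q.degree := by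
        rw [Polynomial.degree_eq_natDegree hqc0, Polynomial.degree_eq_natDegree hq0, hndc]
      have hlt : (qc - q).degree < qc.degree := Polynomial.degree_sub_lt hdeq hqc0 hlc
      rcases eq_or_ne (qc - q) 0 with hz | hz
      · simp [hz]
      · have h2 : ((qc - q).natDegree : WithBot ℕ) < (q.natDegree : WithBot ℕ) := by
          rw [← Polynomial.degree_eq_natDegree hz, ← Polynomial.degree_eq_natDegree hq0, ← hdeq]
          exact hlt
        have h4 : (qc - q).natDegree < q.natDegree := by exact_mod_cast h2
        omega
    have hend : e.natDegree ≤ d := le_trans (Polynomial.natDegree_sub_le _ _) (by simp [hcomp]; exact hd.ge)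
    have hez : e = 0 := by
      apply Polynomial.eq_zero_of_natDegree_lt_card_of_eval_eq_zero e
        (f := fun i : Fin (d + 1) => ((i : ℕ) : ℚ))
        (fun a b hab => by
          have : (a : ℕ) = (b : ℕ) := Nat.cast_injective hab
          exact Fin.ext this)
        (fun i => hroots i i.2)
      simpa using Nat.lt_succ_of_le hend
    intro x
    have := congrArg (Polynomial.eval x) hez
    simp only [he, hqc, eval_sub, eval_comp, eval_add, eval_X, eval_C, eval_zero] at this
    linarith

lemma S2_one (t : ℕ) : S2 (t + 1) 1 = 1 := by
  induction t with
  | zero => rfl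
  | succ t ih =>
    show 1 * S2 (t+1) 1 + S2 (t+1) 0 = 1
    rw [ih, S2_zero]
  where S2_zero (n : ℕ) : S2 (n + 1) 0 = 0 := rfl

lemma exists_F (m : ℕ) : ∃ F : ℚ[X], F.natDegree ≤ 2 * m ∧
    (∀ N : ℕ, F.eval (N : ℚ) = S2 (N + m) N) ∧
    (∀ N : ℕ, F.eval (-(N : ℚ)) = if m ≤ N then (S1 N (N - m) : ℚ) else 0) := by
  induction m with
  | zero =>
    refine ⟨1, by simp, fun N => ?_, fun N => ?_⟩
    · simp [S2_self]
    · simp [S1_self]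
  | succ m ih =>
    obtain ⟨G, hGd, hGpos, hGneg⟩ := ih
    set p : ℚ[X] := X * G with hp
    obtain ⟨q, hqd, hq0, hqstep⟩ := exists_antideriv p
    set F : ℚ[X] := q.comp (X + C 1) with hF
    have hFd : F.natDegree ≤ 2 * (m + 1) := by
      rw [hF, Polynomial.natDegree_comp]
      have nd1 : (X + C 1 : ℚ[X]).natDegree = 1 := Polynomial.natDegree_X_add_C 1
      rw [nd1, mul_one]
      have : p.natDegree ≤ 1 + G.natDegree := by
        rw [hp]
        refine le_trans (Polynomial.natDegree_mul_le) ?_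
        simp
      omega
    have hFeval : ∀ x : ℚ, F.eval x = q.eval (x + 1) := by
      intro x; rw [hF]; simp [Polynomial.eval_comp]
    have hstep : ∀ x : ℚ, F.eval x - F.eval (x - 1) = x * G.eval x := by
      intro x
      rw [hFeval, hFeval]
      have := hqstep x
      rw [hp] at this
      simp only [Polynomial.eval_mul, Polynomial.eval_X] at this
      rw [show x - 1 + 1 = x by ring]
      exact this
    have hF0 : F.eval 0 = 0 := by
      have h2 := hqstep 0
      rw [hp] at h2
      simp only [Polynomial.eval_mul, Polynomial.eval_X, zero_mul, hq0, sub_zero, zero_add] at h2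
      rw [hFeval, zero_add, h2]
    refine ⟨F, hFd, ?_, ?_⟩
    · intro N
      induction N with
      | zero =>
        rw [show S2 (0 + (m+1)) 0 = 0 from rfl]
        simpa using hF0
      | succ N ihN =>
        have hs := hstep ((N : ℚ) + 1)
        have key : F.eval ((N:ℚ) + 1) = F.eval (N:ℚ) + ((N:ℚ)+1) * G.eval ((N:ℚ)+1) := by
          have h3 : (N : ℚ) + 1 - 1 = (N : ℚ) := by ring
          rw [h3] at hs; linarith
        rw [show (((N+1 : ℕ)) : ℚ) = (N : ℚ) + 1 by push_cast; ring, key, ihN,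
          show ((N:ℚ) + 1) = ((N+1 : ℕ) : ℚ) by push_cast; ring, hGpos]
        rw [show N + 1 + (m+1) = (N + m + 1) + 1 by omega]
        rw [show S2 ((N+m+1)+1) (N+1) = (N+1) * S2 (N+m+1) (N+1) + S2 (N+m+1) N from rfl]
        rw [show N + (m+1) = N + m + 1 by omega, show (N+1) + m = N + m + 1 by omega]
        push_cast; ring
    · intro N
      induction N with
      | zero =>
        simp only [Nat.cast_zero, neg_zero, hF0]
        rw [if_neg (by omega)]
      | succ N ihN =>
        have hs := hstep (-(N : ℚ))
        have hstep' : F.eval (-((N:ℚ) + 1)) = F.eval (-(N:ℚ)) + (N:ℚ) * G.eval (-(N:ℚ)) := by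
          have h3 : -(N:ℚ) - 1 = -((N:ℚ)+1) := by ring
          rw [h3] at hs
          linarith
        rw [show (((N+1:ℕ)) : ℚ) = (N:ℚ)+1 by push_cast; ring, hstep', ihN, hGneg]
        by_cases h1 : m + 1 ≤ N
        · rw [if_pos h1, if_pos (by omega : m ≤ N), if_pos (by omega : m + 1 ≤ N + 1)]
          rw [show N + 1 - (m+1) = (N - (m+1)) + 1 by omega]
          rw [show S1 (N+1) ((N-(m+1))+1) = N * S1 N ((N-(m+1))+1) + S1 N (N-(m+1)) from rfl]
          rw [show N - (m+1) + 1 = N - m by omega]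
          push_cast; ring
        · by_cases h2 : m ≤ N
          · have hNm : N = m := by omega
            rw [if_neg h1, if_pos h2, if_pos (by omega : m + 1 ≤ N + 1)]
            rw [show N + 1 - (m+1) = 0 by omega, show N - m = 0 by omega, S1_zero]
            have : (N:ℚ) * (S1 N 0 : ℚ) = 0 := by
              cases N with
              | zero => simp
              | succ t => rw [S1_zero]; simp
            rw [this]
            simp
          · rw [if_neg h2, if_neg (by omega), if_neg (by omega)]
            simp

lemma prod_roots_dvd (m : ℕ) : ∀ (F : ℚ[X]), (∀ i ∈ Finset.Icc 1 m, F.eval (-(i:ℚ)) = 0) →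
    ∃ H : ℚ[X], F = (∏ i ∈ Finset.Icc 1 m, (X + C (i:ℚ))) * H := by
  induction m with
  | zero => exact fun F _ => ⟨F, by simp⟩
  | succ m ih =>
    intro F h
    have hroot : F.IsRoot (-(((m+1) : ℕ) : ℚ)) := h (m+1) (by simp)
    obtain ⟨F₁, hF₁⟩ := Polynomial.dvd_iff_isRoot.mpr hroot
    have hzero : ∀ i ∈ Finset.Icc 1 m, F₁.eval (-(i:ℚ)) = 0 := by
      intro i hi
      simp only [Finset.mem_Icc] at hi
      have he := h i (by simp; omega)
      rw [hF₁] at he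
      simp only [Polynomial.eval_mul, Polynomial.eval_sub, Polynomial.eval_X, Polynomial.eval_C] at he
      have hne : (-(i:ℚ)) - (-((m+1 : ℕ):ℚ)) ≠ 0 := by
        push_cast
        have : (i : ℚ) < (m:ℚ) + 1 := by exact_mod_cast (by omega : i < m + 1)
        intro hc
        nlinarith
      exact (mul_eq_zero.mp he).resolve_left hne
    obtain ⟨H, hH⟩ := ih F₁ hzero
    refine ⟨H, ?_⟩
    rw [Finset.prod_Icc_succ_top (by omega : 1 ≤ m + 1)]
    rw [hF₁, hH]
    have : (X - C (-(((m+1):ℕ):ℚ))) = X + C (((m+1):ℕ):ℚ) := by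
      rw [map_neg]
      ring
    rw [this]
    ring

lemma prod_sub_fac (n m : ℕ) (h : m < n) :
    (∏ i ∈ Finset.Icc 1 m, (n - i)) * (n - 1 - m).factorial = (n-1).factorial := by
  induction m with
  | zero => simp
  | succ m ihm =>
    rw [Finset.prod_Icc_succ_top (by omega : 1 ≤ m + 1)]
    have h1 : n - 1 - m = (n - 1 - (m+1)) + 1 := by omega
    have h2 : (n - 1 - m).factorial = (n - (m+1)) * (n - 1 - (m+1)).factorial := by
      rw [h1, Nat.factorial_succ]
      congr 1
      omega
    have := ihm (by omega)
    rw [h2] at this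
    rw [← this]
    ring

lemma prod_add_fac (n m : ℕ) (h : 1 ≤ n) :
    (∏ l ∈ Finset.range (m+1), (n + l)) * (n-1).factorial = (n+m).factorial := by
  induction m with
  | zero =>
    simp
    rw [show n = (n-1) + 1 by omega, Nat.factorial_succ]
    congr 1 <;> omega
  | succ m ihm =>
    calc (∏ l ∈ Finset.range (m+1+1), (n+l)) * (n-1).factorial
        = ((∏ l ∈ Finset.range (m+1), (n+l)) * (n-1).factorial) * (n + (m+1)) := by
          rw [Finset.prod_range_succ]; ring
      _ = (n+m).factorial * ((n+m) + 1) := by rw [ihm, show n + (m+1) = (n+m)+1 from by omega]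
      _ = (n+(m+1)).factorial := by
          rw [show n+(m+1) = (n+m)+1 by omega, Nat.factorial_succ]; ring

lemma prod_jadd_fac (j m : ℕ) :
    (∏ i ∈ Finset.Icc 1 m, (j + i)) * j.factorial = (j+m).factorial := by
  induction m with
  | zero => simp
  | succ m ihm =>
    rw [Finset.prod_Icc_succ_top (by omega : 1 ≤ m + 1), show j + (m+1) = (j + m) + 1 by omega,
      Nat.factorial_succ, ← ihm]
    ring

lemma prod_range_sub_nat (j : ℕ) : ∏ l ∈ Finset.range j, (j - l) = j.factorial := by
  induction j with
  | zero => rfl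
  | succ j ihj =>
    rw [Finset.prod_range_succ']
    have : ∀ l ∈ Finset.range j, (j + 1 - (l+1)) = j - l := fun l _ => by omega
    rw [Finset.prod_congr rfl this, ihj, Nat.sub_zero, Nat.factorial_succ]
    ring

lemma prod_range_sub_q (j : ℕ) : ∏ l ∈ Finset.range j, ((j:ℚ) - l) = j.factorial := by
  have h1 : ∀ l ∈ Finset.range j, ((j:ℚ) - l) = ((j - l : ℕ) : ℚ) := by
    intro l hl
    rw [Nat.cast_sub (le_of_lt (Finset.mem_range.mp hl))]
  rw [Finset.prod_congr rfl h1, ← Nat.cast_prod, prod_range_sub_nat]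

lemma prod_Ioc_sub_q (j m : ℕ) (h : j ≤ m) :
    ∏ l ∈ Finset.Ioc j m, ((j:ℚ) - l) = (-1)^(m-j) * (m-j).factorial := by
  induction m with
  | zero =>
    have : j = 0 := by omega
    simp [this]
  | succ m ihm =>
    by_cases h2 : j ≤ m
    · rw [Finset.prod_Ioc_succ_top h2, ihm h2, show m + 1 - j = (m - j) + 1 by omega,
        pow_succ, Nat.factorial_succ]
      push_cast
      have : ((j:ℚ) - (m+1)) = -((m - j : ℕ) + 1 : ℚ) := by
        push_cast [Nat.cast_sub h2]
        ring
      rw [this]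
      ring
    · have : j = m + 1 := by omega
      simp [this]

lemma termwise (n m j : ℕ) (hm : 1 ≤ m) (hmn : m < n) (hj : j ≤ m) :
    (∏ i ∈ Finset.Icc 1 m, ((i:ℚ) - n)) *
      (∏ l ∈ (Finset.range (m+1)).erase j, (((j:ℚ) - l)⁻¹ * (-(n:ℚ) - l)))
    = (-1)^(m+j) * ((n-1+j).choose (m+j) : ℚ) * ((n+m).choose (m-j) : ℚ) *
      ∏ i ∈ Finset.Icc 1 m, ((j:ℚ) + i) := by
  have fact_ne : ∀ N : ℕ, ((N.factorial : ℚ)) ≠ 0 :=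
    fun N => Nat.cast_ne_zero.mpr (Nat.factorial_ne_zero N)
  have hjm : j ∈ Finset.range (m+1) := by simp; omega
  have hcard : ((Finset.range (m+1)).erase j).card = m := by
    rw [Finset.card_erase_of_mem hjm, Finset.card_range]
    omega
  have hn1 : (0:ℚ) < (n:ℚ) := by exact_mod_cast (by omega : 0 < n)
  have hnj0 : ((n:ℚ) + (j:ℚ)) ≠ 0 := by positivity
  set a : ℚ := ((n-1).factorial : ℚ) with ha
  set b : ℚ := ((n-1-m).factorial : ℚ) with hb
  set c : ℚ := (j.factorial : ℚ) with hc
  set d : ℚ := ((m-j).factorial : ℚ) with hd2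
  set e : ℚ := ((n+m).factorial : ℚ) with he
  set f : ℚ := ((m+j).factorial : ℚ) with hf
  set g : ℚ := ((n-1+j).factorial : ℚ) with hg
  -- component A
  have hA : (∏ i ∈ Finset.Icc 1 m, ((i:ℚ) - n)) = (-1)^m * (a / b) := by
    have h1 : ∀ i ∈ Finset.Icc 1 m, ((i:ℚ) - n) = (-1) * ((n - i : ℕ) : ℚ) := by
      intro i hi
      simp only [Finset.mem_Icc] at hi
      rw [Nat.cast_sub (by omega)]
      ring
    rw [Finset.prod_congr rfl h1, Finset.prod_mul_distrib, Finset.prod_const, Nat.card_Icc,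
      show m + 1 - 1 = m from by omega]
    have h2 : (∏ i ∈ Finset.Icc 1 m, ((n - i : ℕ):ℚ)) = a / b := by
      rw [eq_div_iff (fact_ne _), ← Nat.cast_prod, ← Nat.cast_mul, prod_sub_fac n m hmn]
    rw [h2]
  -- component B : prod over erase of (-n - l)
  have hB : (∏ l ∈ (Finset.range (m+1)).erase j, (-(n:ℚ) - l))
      = (-1)^m * (e / (a * ((n:ℚ) + j))) := by
    have h1 : ∀ l ∈ (Finset.range (m+1)).erase j, (-(n:ℚ) - l) = (-1) * ((n + l : ℕ) : ℚ) := by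
      intro l _
      push_cast
      ring
    rw [Finset.prod_congr rfl h1, Finset.prod_mul_distrib, Finset.prod_const, hcard]
    have h2 : (∏ l ∈ (Finset.range (m+1)).erase j, ((n + l : ℕ):ℚ)) * ((n + j : ℕ):ℚ)
        = ∏ l ∈ Finset.range (m+1), ((n + l : ℕ):ℚ) :=
      Finset.prod_erase_mul _ _ hjm
    have h3 : (∏ l ∈ Finset.range (m+1), ((n + l : ℕ):ℚ)) * a = e := by
      rw [← Nat.cast_prod, ← Nat.cast_mul, prod_add_fac n m (by omega)]
    have h4 : (∏ l ∈ (Finset.range (m+1)).erase j, ((n + l : ℕ):ℚ))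
        = e / (a * ((n:ℚ) + j)) := by
      rw [eq_div_iff (by push_cast; positivity)]
      push_cast at h2 h3 ⊢
      linear_combination a * h2 + h3
    rw [h4]
  -- component J : prod over erase of (j - l)
  have hsplit : (Finset.range (m+1)).erase j = Finset.range j ∪ Finset.Ioc j m := by
    ext l
    simp only [Finset.mem_erase, Finset.mem_range, Finset.mem_union, Finset.mem_Ioc]
    omega
  have hdisj : Disjoint (Finset.range j) (Finset.Ioc j m) := by
    rw [Finset.disjoint_left]
    intro l h1 h2
    simp only [Finset.mem_range] at h1
    simp only [Finset.mem_Ioc] at h2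
    omega
  have hJ : (∏ l ∈ (Finset.range (m+1)).erase j, ((j:ℚ) - l)) = (-1)^(m-j) * (c * d) := by
    rw [hsplit, Finset.prod_union hdisj, prod_range_sub_q, prod_Ioc_sub_q j m hj]
    ring
  -- component D
  have hD : (∏ i ∈ Finset.Icc 1 m, ((j:ℚ) + i)) = f / c := by
    have h1 : ∀ i ∈ Finset.Icc 1 m, ((j:ℚ) + i) = ((j + i : ℕ) : ℚ) := by
      intro i _; push_cast; ring
    rw [Finset.prod_congr rfl h1, eq_div_iff (fact_ne _), ← Nat.cast_prod, ← Nat.cast_mul,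
      prod_jadd_fac j m, hf, show j + m = m + j from by omega]
  -- chooses
  have hh : ((n+j).factorial : ℚ) = ((n:ℚ) + j) * g := by
    rw [show n + j = (n-1+j) + 1 from by omega, Nat.factorial_succ]
    push_cast [Nat.cast_sub (by omega : 1 ≤ n)]
    ring
  have hC1 : ((n-1+j).choose (m+j) : ℚ) = g / (f * b) := by
    rw [Nat.cast_choose ℚ (by omega : m + j ≤ n - 1 + j),
      show n - 1 + j - (m + j) = n - 1 - m from by omega]
  have hC2 : ((n+m).choose (m-j) : ℚ) = e / (d * (((n:ℚ) + j) * g)) := by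
    rw [Nat.cast_choose ℚ (by omega : m - j ≤ n + m),
      show n + m - (m - j) = n + j from by omega, hh]
  -- signs
  have hsign : ((-1:ℚ))^(m-j) = (-1)^(m+j) := by
    rw [show m + j = (m - j) + 2*j from by omega, pow_add, pow_mul]
    norm_num
  -- assemble
  rw [Finset.prod_mul_distrib, Finset.prod_inv_distrib, hJ, hB, hA, hC1, hC2, hD, hsign]
  have hb0 : b ≠ 0 := fact_ne _
  have hc0 : c ≠ 0 := fact_ne _
  have hd0 : d ≠ 0 := fact_ne _
  have ha0 : a ≠ 0 := fact_ne _
  have hf0 : f ≠ 0 := fact_ne _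
  have hg0 : g ≠ 0 := fact_ne _
  have ht : ((-1:ℚ))^(m+j) ≠ 0 := by
    apply pow_ne_zero; norm_num
  have hs : ((-1:ℚ))^m * ((-1:ℚ))^m = 1 := by
    rw [← pow_add, show m + m = 2*m from by omega, pow_mul]
    norm_num
  have ht2 : ((-1:ℚ))^(m+j) * ((-1:ℚ))^(m+j) = 1 := by
    rw [← pow_add, show (m+j) + (m+j) = 2*(m+j) from by omega, pow_mul]
    norm_num
  have htinv : (((-1:ℚ))^(m+j))⁻¹ = ((-1:ℚ))^(m+j) :=
    inv_eq_of_mul_eq_one_left ht2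
  rw [mul_inv, htinv]
  generalize hU : ((-1:ℚ))^m = u at hs ⊢
  generalize hV : ((-1:ℚ))^(m+j) = v at ht2 ⊢
  field_simp
  ring_nf
  linear_combination (v * e) * hs

lemma key_q (n m : ℕ) (hm : 1 ≤ m) (hmn : m < n) :
    ((S1 n (n - m) : ℕ) : ℚ) = (-1)^m * ∑ j ∈ Finset.range (m+1),
      (-1:ℚ)^j * ((n-1+j).choose (m+j) : ℚ) * ((n+m).choose (m-j) : ℚ) * (S2 (m+j) j : ℕ) := by
  obtain ⟨F, hFd, hFpos, hFneg⟩ := exists_F m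
  set P : ℚ[X] := ∏ i ∈ Finset.Icc 1 m, (X + C (i:ℚ)) with hPdef
  have hroots : ∀ i ∈ Finset.Icc 1 m, F.eval (-(i:ℚ)) = 0 := by
    intro i hi
    simp only [Finset.mem_Icc] at hi
    rw [hFneg i]
    by_cases h : m ≤ i
    · have hi2 : i = m := by omega
      rw [if_pos h, hi2, Nat.sub_self, show m = (m-1)+1 from by omega, S1_zero]
      simp
    · rw [if_neg h]
  obtain ⟨H, hH⟩ := prod_roots_dvd m F hroots
  have hFne : F ≠ 0 := by
    intro h0
    have h1 := hFpos 1
    rw [h0, show (1:ℕ) + m = m + 1 from by omega, S2_one] at h1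
    simp at h1
  have hPmonic : P.Monic := monic_prod_of_monic _ _ (fun i _ => monic_X_add_C _)
  have hPdeg : P.natDegree = m := by
    have h := Polynomial.natDegree_prod (Finset.Icc 1 m) (fun i : ℕ => X + C (i:ℚ))
      (fun i _ => (monic_X_add_C ((i:ℕ):ℚ)).ne_zero)
    rw [hPdef, h]
    simp only [Polynomial.natDegree_X_add_C]
    rw [Finset.sum_const, Nat.card_Icc, smul_eq_mul]
    omega
  have hHne : H ≠ 0 := fun h0 => hFne (by rw [hH, h0, mul_zero])
  have hHdeg : H.natDegree ≤ m := by
    have h1 : F.natDegree = P.natDegree + H.natDegree := by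
      rw [hH]
      exact Polynomial.natDegree_mul hPmonic.ne_zero hHne
    omega
  have hinj : Set.InjOn (fun i : ℕ => (i:ℚ)) (Finset.range (m+1)) :=
    fun x _ y _ h => Nat.cast_injective h
  have hdeglt : H.degree < ((Finset.range (m+1)).card : ℕ) := by
    rw [Finset.card_range]
    apply lt_of_le_of_lt (Polynomial.degree_le_natDegree)
    exact_mod_cast Nat.lt_succ_of_le hHdeg
  have hint := Lagrange.eq_interpolate hinj hdeglt
  -- evaluations of P
  have hPn : P.eval (-(n:ℚ)) = ∏ i ∈ Finset.Icc 1 m, ((i:ℚ) - n) := by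
    rw [hPdef, Polynomial.eval_prod]
    refine Finset.prod_congr rfl fun i _ => ?_
    simp only [Polynomial.eval_add, Polynomial.eval_X, Polynomial.eval_C]
    ring
  have hPj : ∀ j : ℕ, P.eval (j:ℚ) = ∏ i ∈ Finset.Icc 1 m, ((j:ℚ) + i) := by
    intro j
    rw [hPdef, Polynomial.eval_prod]
    exact Finset.prod_congr rfl fun i _ => by
      simp only [Polynomial.eval_add, Polynomial.eval_X, Polynomial.eval_C]
  -- evaluation of H at -n via interpolation
  have hHn : H.eval (-(n:ℚ)) = ∑ j ∈ Finset.range (m+1),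
      H.eval (j:ℚ) * ∏ l ∈ (Finset.range (m+1)).erase j, (((j:ℚ) - l)⁻¹ * (-(n:ℚ) - l)) := by
    conv_lhs => rw [hint]
    rw [Lagrange.interpolate_apply, Polynomial.eval_finset_sum]
    refine Finset.sum_congr rfl fun j hj => ?_
    rw [Polynomial.eval_mul, Polynomial.eval_C, Lagrange.basis, Polynomial.eval_prod]
    congr 1
    refine Finset.prod_congr rfl fun l hl => ?_
    rw [Lagrange.basisDivisor]
    simp only [Polynomial.eval_mul, Polynomial.eval_C, Polynomial.eval_sub, Polynomial.eval_X]
  -- main computation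
  have hSval : ((S1 n (n - m) : ℕ) : ℚ) = F.eval (-(n:ℚ)) := by
    rw [hFneg n, if_pos (by omega)]
  rw [hSval, hH, Polynomial.eval_mul, hPn, hHn, Finset.mul_sum]
  rw [Finset.mul_sum]
  refine Finset.sum_congr rfl fun j hj => ?_
  have hjm : j ≤ m := by
    simp only [Finset.mem_range] at hj
    omega
  have ht := termwise n m j hm hmn hjm
  have hF2 : (S2 (m+j) j : ℚ) = F.eval (j:ℚ) := by
    rw [hFpos j, show j + m = m + j from by omega]
  calc (∏ i ∈ Finset.Icc 1 m, ((i:ℚ) - n)) * (H.eval (j:ℚ) *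
          ∏ l ∈ (Finset.range (m+1)).erase j, (((j:ℚ) - l)⁻¹ * (-(n:ℚ) - l)))
      = ((∏ i ∈ Finset.Icc 1 m, ((i:ℚ) - n)) *
          ∏ l ∈ (Finset.range (m+1)).erase j, (((j:ℚ) - l)⁻¹ * (-(n:ℚ) - l))) * H.eval (j:ℚ) := by
        ring
    _ = ((-1)^(m+j) * ((n-1+j).choose (m+j) : ℚ) * ((n+m).choose (m-j) : ℚ) *
          ∏ i ∈ Finset.Icc 1 m, ((j:ℚ) + i)) * H.eval (j:ℚ) := by rw [ht]
    _ = (-1)^m * ((-1:ℚ)^j * ((n-1+j).choose (m+j) : ℚ) * ((n+m).choose (m-j) : ℚ) *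
          (P.eval (j:ℚ) * H.eval (j:ℚ))) := by
        rw [hPj j, pow_add]
        ring
    _ = (-1)^m * ((-1:ℚ)^j * ((n-1+j).choose (m+j) : ℚ) * ((n+m).choose (m-j) : ℚ) *
          (S2 (m+j) j : ℚ)) := by
        rw [hF2, ← Polynomial.eval_mul, ← hH]

theorem schlafli_identity (n k : ℕ) (hkn : k ≤ n) :
    (S1 n k : ℤ) = (-1) ^ (n - k) *
      ∑ j ∈ Finset.range (n - k + 1), (-1 : ℤ) ^ j *
        ((n - 1 + j).choose (n - k + j)) * ((2 * n - k).choose (n - k - j)) *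
        S2 (n - k + j) j := by
  rcases Nat.eq_or_lt_of_le hkn with heq | hlt
  · subst heq
    rw [Nat.sub_self]
    simp [S1_self, show S2 0 0 = 1 from rfl]
  · by_cases hk0 : k = 0
    · subst hk0
      have hn1 : 1 ≤ n := by omega
      rw [show S1 n 0 = 0 from by rw [show n = (n-1)+1 from by omega]; exact S1_zero _]
      rw [Finset.sum_eq_zero, mul_zero, Nat.cast_zero]
      intro j hj
      have hch : (n - 1 + j).choose (n - 0 + j) = 0 := by
        apply Nat.choose_eq_zero_of_lt
        omega
      rw [hch]
      push_cast
      ring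
    · -- main case
      have hm : 1 ≤ n - k := by omega
      have hmn : n - k < n := by omega
      have key := key_q n (n - k) hm hmn
      rw [show n - (n - k) = k from by omega] at key
      have h2n : 2 * n - k = n + (n - k) := by omega
      rw [h2n]
      exact_mod_cast key
end

section
/- For integers n, k, i, j with 0 ≤ j ≤ i ≤ n-k and 0 ≤ k ≤ n, one has C(n, k+i)·C(n, k-j) − C(n, k+i+1)·C(n, k-j-1) = ((i+j+1)/(n+1)) · C(n+1, k-j) · C(n+1, k+i+1). -/
/-- Binomial coefficient for integer arguments: `icho a b = C(a,b)`, equal to `0`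
when `b < 0` (unless `a = b`, where it is `1`) or `b > a`. -/
def icho (a b : ℤ) : ℤ :=
  if 0 ≤ b then (if b ≤ a then (a.toNat.choose b.toNat : ℤ) else 0)
  else if a = b then 1 else 0

lemma icho_eq_choose {a b : ℤ} (h1 : 0 ≤ b) (h2 : b ≤ a) :
    icho a b = (a.toNat.choose b.toNat : ℤ) := by
  simp [icho, h1, h2]

lemma icho_neg {a b : ℤ} (h1 : b < 0) (h2 : a ≠ b) : icho a b = 0 := by
  simp [icho, not_le.mpr h1, h2]

lemma icho_gt {a b : ℤ} (h : a < b) : icho a b = 0 := by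
  have h2 : ¬ b ≤ a := not_le.mpr h
  by_cases h1 : 0 ≤ b <;> simp [icho, h1, h2, ne_of_gt h]
  omega

lemma key (N r q : ℕ) (hrq : r + 1 ≤ q) (hq : q ≤ N) :
    ((N:ℤ)+1) * ((N.choose q : ℤ) * N.choose (r+1) - (N.choose (q+1) : ℤ) * N.choose r) =
      ((q:ℤ) - r) * (N+1).choose (r+1) * (N+1).choose (q+1) := by
  have hrN : r ≤ N := by omega
  have eA : ((N:ℤ)+1) * N.choose q = ((N+1).choose (q+1) : ℤ) * ((q:ℤ)+1) := by
    exact_mod_cast congrArg (Nat.cast : ℕ → ℤ) (Nat.add_one_mul_choose_eq N q)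
  have eB : (N.choose (q+1) : ℤ) * ((N:ℤ)+1) = ((N+1).choose (q+1) : ℤ) * ((N:ℤ) - q) := by
    have := Nat.choose_mul_succ_eq N (q+1)
    have : ((N.choose (q+1) * (N+1) : ℕ) : ℤ) = (((N+1).choose (q+1) * (N - q) : ℕ) : ℤ) := by
      rw [this]; congr 2; omega
    push_cast [Nat.cast_sub hq] at this
    linarith [this]
  have eC : (((N+1).choose (r+1) : ℕ) : ℤ) = (N.choose r : ℤ) + (N.choose (r+1) : ℤ) := by
    exact_mod_cast congrArg (Nat.cast : ℕ → ℤ) (Nat.choose_succ_succ N r)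
  have eD : (N.choose (r+1) : ℤ) * ((r:ℤ)+1) = (N.choose r : ℤ) * ((N:ℤ) - r) := by
    have := Nat.choose_succ_right_eq N r
    have : ((N.choose (r+1) * (r+1) : ℕ) : ℤ) = ((N.choose r * (N - r) : ℕ) : ℤ) := by rw [this]
    push_cast [Nat.cast_sub hrN] at this
    linarith [this]
  linear_combination (N.choose (r+1) : ℤ) * eA - (N.choose r : ℤ) * eB
    - ((q:ℤ) - r) * ((N+1).choose (q+1) : ℤ) * eC + ((N+1).choose (q+1) : ℤ) * eD

theorem factA (n k i j : ℤ) (hj : 0 ≤ j) (hji : j ≤ i) (hik : i ≤ n - k)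
    (hk : 0 ≤ k) (hkn : k ≤ n) :
    (n + 1) * (icho n (k + i) * icho n (k - j) - icho n (k + i + 1) * icho n (k - j - 1)) =
      (i + j + 1) * icho (n + 1) (k - j) * icho (n + 1) (k + i + 1) := by
  set N := n.toNat with hN
  set q := (k + i).toNat with hq
  have hn0 : 0 ≤ n := by omega
  have hNn : (N : ℤ) = n := Int.toNat_of_nonneg hn0
  have hqv : ((q : ℤ)) = k + i := Int.toNat_of_nonneg (by omega)
  have hqN : q ≤ N := by omega
  have e1 : icho n (k + i) = (N.choose q : ℤ) := by
    rw [icho_eq_choose (by omega) (by omega)]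
  have e2 : icho n (k + i + 1) = (N.choose (q+1) : ℤ) := by
    by_cases h : k + i + 1 ≤ n
    · rw [icho_eq_choose (by omega) h]
      congr 2; omega
    · rw [icho_gt (by omega)]
      have : q = N := by omega
      rw [this, Nat.choose_succ_self]; simp
  have e3 : icho (n + 1) (k + i + 1) = ((N+1).choose (q+1) : ℤ) := by
    rw [icho_eq_choose (by omega) (by omega)]
    congr 2 <;> omega
  by_cases hkj : 0 ≤ k - j
  · set p := (k - j).toNat with hp
    have hpv : ((p : ℤ)) = k - j := Int.toNat_of_nonneg hkj
    have e4 : icho n (k - j) = (N.choose p : ℤ) := by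
      rw [icho_eq_choose (by omega) (by omega)]
    have e5 : icho (n + 1) (k - j) = ((N+1).choose p : ℤ) := by
      rw [icho_eq_choose (by omega) (by omega)]
      congr 2; omega
    rcases Nat.eq_zero_or_pos p with hp0 | hp0
    · -- k = j case
      have hkj' : k - j = 0 := by omega
      have e6 : icho n (k - j - 1) = 0 := icho_neg (by omega) (by omega)
      have eA : ((N:ℤ)+1) * N.choose q = ((N+1).choose (q+1) : ℤ) * ((q:ℤ)+1) := by
        exact_mod_cast congrArg (Nat.cast : ℕ → ℤ) (Nat.add_one_mul_choose_eq N q)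
      rw [e1, e2, e3, e4, e5, e6, hp0, ← hNn]
      simp only [Nat.choose_zero_right, Nat.cast_one]
      have hij : i + j + 1 = (q : ℤ) + 1 := by omega
      rw [hij]
      linarith [eA]
    · -- p ≥ 1
      obtain ⟨r, hr⟩ : ∃ r, p = r + 1 := ⟨p - 1, by omega⟩
      have e6 : icho n (k - j - 1) = (N.choose r : ℤ) := by
        rw [icho_eq_choose (by omega) (by omega)]
        congr 2; omega
      have hrq : r + 1 ≤ q := by omega
      have hij : i + j + 1 = (q : ℤ) - r := by omega
      rw [e1, e2, e3, e4, e5, e6, hr, hij, ← hNn]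
      have := key N r q hrq hqN
      push_cast at this ⊢
      linarith [this]
  · have e4 : icho n (k - j) = 0 := icho_neg (by omega) (by omega)
    have e5 : icho (n + 1) (k - j) = 0 := icho_neg (by omega) (by omega)
    have e6 : icho n (k - j - 1) = 0 := icho_neg (by omega) (by omega)
    rw [e4, e5, e6]; ring
end

section
/- For integers n, k, i, j with 0 ≤ j ≤ i ≤ n-k and 2 ≤ k ≤ n, one has C(n+j-1, k-1)·C(n-i-1, k-1) − C(n+j, k-1)·C(n-i-2, k-1) = ((i+j+1)/(n+j)) · C(n+j, k-1) · C(n-i-2, k-2). -/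
lemma icho_eq (x y : ℤ) (h0 : 0 ≤ y) (h1 : y ≤ x) :
    icho x y = (x.toNat.choose y.toNat : ℤ) := by
  simp [icho, h0, h1]

lemma key_s4 (a b c : ℕ) (hba : b + 1 ≤ a) (hbc : b ≤ c) :
    ((a : ℤ) + 1) * ((a.choose (b+1) : ℤ) * ((c+1).choose (b+1) : ℤ) -
        ((a+1).choose (b+1) : ℤ) * (c.choose (b+1) : ℤ)) =
      ((a : ℤ) - c) * ((a+1).choose (b+1) : ℤ) * (c.choose b : ℤ) := by
  have h1n : (a+1) * a.choose (b+1) = (a+1).choose (b+1) * (a - b) := by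
    have t1 := Nat.add_one_mul_choose_eq a (b+1)
    have t2 := Nat.choose_succ_right_eq (a+1) (b+1)
    rw [t1, t2]
    congr 1
    omega
  have h1 : ((a : ℤ) + 1) * (a.choose (b+1) : ℤ) =
      ((a+1).choose (b+1) : ℤ) * ((a : ℤ) - b) := by
    have := congrArg (fun t : ℕ => (t : ℤ)) h1n
    push_cast [Nat.cast_sub (by omega : b ≤ a)] at this
    linarith [this]
  have h2 : (((c+1).choose (b+1) : ℤ)) = (c.choose b : ℤ) + (c.choose (b+1) : ℤ) := by
    rw [Nat.choose_succ_succ]; push_cast; ring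
  have h3n : c.choose (b+1) * (b+1) = c.choose b * (c - b) := Nat.choose_succ_right_eq c b
  have h3 : (c.choose (b+1) : ℤ) * ((b : ℤ)+1) = (c.choose b : ℤ) * ((c : ℤ) - b) := by
    have := congrArg (fun t : ℕ => (t : ℤ)) h3n
    push_cast [Nat.cast_sub hbc] at this
    linarith [this]
  linear_combination (((c+1).choose (b+1) : ℤ)) * h1 +
    ((a : ℤ) - b) * ((a+1).choose (b+1) : ℤ) * h2 - ((a+1).choose (b+1) : ℤ) * h3

theorem factB (n k i j : ℤ) (hj : 0 ≤ j) (hji : j ≤ i) (hik : i ≤ n - k)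
    (hk : 2 ≤ k) (hkn : k ≤ n) :
    (n + j) * (icho (n + j - 1) (k - 1) * icho (n - i - 1) (k - 1) -
        icho (n + j) (k - 1) * icho (n - i - 2) (k - 1)) =
      (i + j + 1) * icho (n + j) (k - 1) * icho (n - i - 2) (k - 2) := by
  set a := (n + j - 1).toNat with ha
  set b := (k - 2).toNat with hb
  set c := (n - i - 2).toNat with hc
  have haZ : (a : ℤ) = n + j - 1 := Int.toNat_of_nonneg (by omega)
  have hbZ : (b : ℤ) = k - 2 := Int.toNat_of_nonneg (by omega)
  have hcZ : (c : ℤ) = n - i - 2 := Int.toNat_of_nonneg (by omega)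
  have e1 : icho (n + j - 1) (k - 1) = (a.choose (b+1) : ℤ) := by
    have t1 : (n + j - 1).toNat = a := by omega
    have t2 : (k - 1).toNat = b+1 := by omega
    rw [icho_eq _ _ (by omega) (by omega), t1, t2]
  have e2 : icho (n + j) (k - 1) = ((a+1).choose (b+1) : ℤ) := by
    have t1 : (n + j).toNat = (a+1) := by omega
    have t2 : (k - 1).toNat = b+1 := by omega
    rw [icho_eq _ _ (by omega) (by omega), t1, t2]
  have e3 : icho (n - i - 1) (k - 1) = ((c+1).choose (b+1) : ℤ) := by
    have t1 : (n - i - 1).toNat = (c+1) := by omega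
    have t2 : (k - 1).toNat = b+1 := by omega
    rw [icho_eq _ _ (by omega) (by omega), t1, t2]
  have e4 : icho (n - i - 2) (k - 1) = (c.choose (b+1) : ℤ) := by
    by_cases h : (k - 1 : ℤ) ≤ n - i - 2
    · have t1 : (n - i - 2).toNat = c := by omega
      have t2 : (k - 1).toNat = b+1 := by omega
      rw [icho_eq _ _ (by omega) h, t1, t2]
    · have h0 : icho (n - i - 2) (k - 1) = 0 := by
        simp [icho, h, (by omega : (0:ℤ) ≤ k - 1)]
        intro h1; omega
      rw [h0, Nat.choose_eq_zero_of_lt (by omega : c < b + 1)]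
      simp
  have e5 : icho (n - i - 2) (k - 2) = (c.choose (b) : ℤ) := by
    have t1 : (n - i - 2).toNat = c := by omega
    have t2 : (k - 2).toNat = b := by omega
    rw [icho_eq _ _ (by omega) (by omega), t1, t2]
  rw [e1, e2, e3, e4, e5]
  have := key_s4 a b c (by omega) (by omega)
  have hn : n + j = (a : ℤ) + 1 := by omega
  have hij : i + j + 1 = (a : ℤ) - c := by omega
  rw [hn, hij]
  exact this
end

section
/- Define B^{n,k}_{i,j} = C(n+j-1, k-1)·C(n-i-1, k-1) − C(n+j, k-1)·C(n-i-2, k-1). Then for nonnegative integers n, k, i, j with appropriate ranges, −B^{n+1,k+1}_{i,j-1} + B^{n+1,k+1}_{i,j} + B^{n+1,k+1}_{i+1,j-1} − B^{n+1,k+1}_{i+1,j} = B^{n,k}_{i,j}. -/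
/-- Pascal's rule for `icho`, valid for every integer `a` when `0 ≤ k`. -/
lemma icho_pascal (a k : ℤ) (hk : 0 ≤ k) :
    icho (a + 1) k = icho a k + icho a (k - 1) := by
  unfold icho
  by_cases hk0 : k = 0
  · subst hk0
    by_cases ha : 0 ≤ a
    · have h1 : (0:ℤ) ≤ a + 1 := by omega
      have h2 : a ≠ -1 := by omega
      simp [ha, h1, h2]
    · by_cases ha2 : a = -1
      · subst ha2; norm_num [icho]
      · have h1 : ¬ (0:ℤ) ≤ a + 1 := by omega
        simp [ha, h1, ha2]
  · have hk1 : 1 ≤ k := by omega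
    have hk1' : (0:ℤ) ≤ k - 1 := by omega
    by_cases ha : k ≤ a
    · have h1 : k ≤ a + 1 := by omega
      have h2 : k - 1 ≤ a := by omega
      simp only [hk, hk1', h1, ha, h2, if_true]
      have e1 : (a+1).toNat = a.toNat + 1 := by omega
      have e2 : k.toNat = (k-1).toNat + 1 := by omega
      rw [e1, e2, Nat.choose_succ_succ]
      push_cast
      have e3 : a.toNat.choose ((k-1).toNat + 1) = a.toNat.choose k.toNat := by rw [e2]
      rw [e3]; ring
    · by_cases ha2 : a = k - 1
      · subst ha2
        have h1 : k ≤ k - 1 + 1 := by omega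
        have h2 : ¬ k ≤ k - 1 := by omega
        simp only [hk, hk1', h1, h2, le_refl, if_true, if_false]
        have e1 : (k-1+1).toNat = k.toNat := by omega
        simp [e1, Nat.choose_self]
      · have h1 : ¬ k ≤ a + 1 := by omega
        have h2 : ¬ k - 1 ≤ a := by omega
        simp [hk, hk1', h1, ha, h2, ha2]

/-- The coefficients `B^{n,k}_{i,j}`. -/
def B (n k i j : ℤ) : ℤ :=
  icho (n + j - 1) (k - 1) * icho (n - i - 1) (k - 1) -
    icho (n + j) (k - 1) * icho (n - i - 2) (k - 1)

theorem rel4B (n k i j : ℤ) (hj : 0 ≤ j) (hji : j ≤ i) (hik : i ≤ n - k)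
    (hk : 0 ≤ k) (hkn : k ≤ n) :
    -B (n + 1) (k + 1) i (j - 1) + B (n + 1) (k + 1) i j +
      B (n + 1) (k + 1) (i + 1) (j - 1) - B (n + 1) (k + 1) (i + 1) j = B n k i j := by
  have p1 := icho_pascal (n + j - 1) k hk
  have p2 := icho_pascal (n + j) k hk
  have p3 := icho_pascal (n - i - 1) k hk
  have p4 := icho_pascal (n - i - 2) k hk
  simp only [B]
  ring_nf
  ring_nf at p1 p2 p3 p4
  rw [p2, p1, p3, p4]
  ring
end

section
/- Define A^{n,k}_{i,j} = C(n,k+i)·C(n,k-j) − C(n,k+i+1)·C(n,k-j-1). Then A^{n-1,k-1}_{i,j-1} + A^{n-1,k-1}_{i,j} + A^{n-1,k-1}_{i+1,j-1} + A^{n-1,k-1}_{i+1,j} = A^{n,k}_{i,j}. -/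
/-- The coefficients `A^{n,k}_{i,j}`. -/
def A (n k i j : ℤ) : ℤ :=
  icho n (k + i) * icho n (k - j) - icho n (k + i + 1) * icho n (k - j - 1)

/-- Pascal's rule for `icho`, valid for all integer `m` once `1 ≤ n`. -/
lemma icho_pascal_s8 (n m : ℤ) (hn : 1 ≤ n) :
    icho n m = icho (n - 1) (m - 1) + icho (n - 1) m := by
  unfold icho
  split_ifs <;> try omega
  · have h1 : n.toNat = (n-1).toNat + 1 := by omega
    have h2 : m.toNat = (m-1).toNat + 1 := by omega
    rw [h1, h2, Nat.choose_succ_succ]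
    push_cast; ring
  · have h1 : n.toNat = (n-1).toNat + 1 := by omega
    have h2 : m.toNat = (m-1).toNat + 1 := by omega
    have h3 : (m-1).toNat = (n-1).toNat := by omega
    rw [h1, h2, h3]
    simp [Nat.choose_self, Nat.choose_succ_self]
  · have hm : m = 0 := by omega
    subst hm
    simp

theorem rel4A (n k i j : ℤ) (hj : 0 ≤ j) (hji : j ≤ i) (hik : i ≤ n - k)
    (hk : 1 ≤ k) (hkn : k ≤ n) :
    A (n - 1) (k - 1) i (j - 1) + A (n - 1) (k - 1) i j +
      A (n - 1) (k - 1) (i + 1) (j - 1) + A (n - 1) (k - 1) (i + 1) j = A n k i j := by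
  have hn : (1:ℤ) ≤ n := by omega
  have p1 : icho n (k + i) = icho (n-1) (k - 1 + i) + icho (n-1) (k + i) := by
    rw [icho_pascal_s8 n (k+i) hn]; ring_nf
  have p2 : icho n (k - j) = icho (n-1) (k - 1 - j) + icho (n-1) (k - j) := by
    rw [icho_pascal_s8 n (k-j) hn]; ring_nf
  have p3 : icho n (k + i + 1) = icho (n-1) (k + i) + icho (n-1) (k + i + 1) := by
    rw [icho_pascal_s8 n (k+i+1) hn]; ring_nf
  have p4 : icho n (k - j - 1) = icho (n-1) (k - j - 2) + icho (n-1) (k - j - 1) := by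
    rw [icho_pascal_s8 n (k-j-1) hn]; ring_nf
  simp only [A, p1, p2, p3, p4]
  have e1 : k - 1 + i + 1 = k + i := by ring
  have e2 : k - 1 - (j-1) = k - j := by ring
  have e4 : k - 1 + (i+1) = k + i := by ring
  have e5 : k - 1 + (i+1) + 1 = k + i + 1 := by ring
  have e6 : k - 1 - j - 1 = k - j - 2 := by ring
  rw [e2, e5, e4, e1, e6]
  ring
end

section
/- For nonnegative integers n, k, i, u with k ≤ n and i + u ≤ n - k, one has Σ_{j=0}^{n-i-u-k} (-1)^j · C(2n-i-k-j, j+k) · C(j+k, k) · C(2n-2j-2k-i, n-j-k-i-u) = C(n+u, k) · C(n-i-u, k). -/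
open Finset

-- m-th finite difference of j ↦ C(A-j, r+m) : ∑ (-1)^j C(m,j) C(A-j, r+m) = C(A-m, r)
lemma key_diff (m : ℕ) : ∀ A r : ℕ, m ≤ A →
    ∑ j ∈ range (m + 1), (-1 : ℤ) ^ j * (m.choose j) * ((A - j).choose (r + m)) =
      ((A - m).choose r : ℤ) := by
  induction m with
  | zero => intro A r _; simp
  | succ m ih =>
    intro A r hA
    have hstep : ∑ j ∈ range (m + 1), (-1 : ℤ) ^ j * (m.choose j) * ((A - 1 - j).choose (r + m))
        = ((A - 1 - m).choose r : ℤ) := ih (A - 1) r (by omega)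
    calc ∑ j ∈ range (m + 2), (-1 : ℤ) ^ j * ((m + 1).choose j) * ((A - j).choose (r + m + 1))
        = ∑ j ∈ range (m + 1), (-1 : ℤ) ^ (j + 1) * ((m + 1).choose (j + 1)) *
            ((A - (j + 1)).choose (r + m + 1)) + (-1 : ℤ) ^ 0 * ((m + 1).choose 0) *
            ((A - 0).choose (r + m + 1)) := Finset.sum_range_succ' _ _
      _ = (∑ j ∈ range (m + 1), ((-1 : ℤ) ^ (j + 1) * (m.choose j) * ((A - 1 - j).choose (r + m + 1))
            + (-1 : ℤ) ^ (j + 1) * (m.choose (j + 1)) * ((A - 1 - j).choose (r + m + 1))))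
            + (A.choose (r + m + 1) : ℤ) := by
          congr 1
          · refine Finset.sum_congr rfl fun j hj => ?_
            have h : A - (j + 1) = A - 1 - j := by omega
            rw [h, Nat.choose_succ_succ]; push_cast; ring
          · simp
      _ = (∑ j ∈ range (m + 1), (-1 : ℤ) ^ (j + 1) * (m.choose j) * ((A - 1 - j).choose (r + m + 1)))
            + ((∑ j ∈ range (m + 1), (-1 : ℤ) ^ (j + 1) * (m.choose (j + 1)) *
              ((A - 1 - j).choose (r + m + 1))) + (A.choose (r + m + 1) : ℤ)) := by
          rw [Finset.sum_add_distrib]; ring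
      _ = (∑ j ∈ range (m + 1), (-1 : ℤ) ^ (j + 1) * (m.choose j) * ((A - 1 - j).choose (r + m + 1)))
            + ∑ j ∈ range (m + 1), (-1 : ℤ) ^ j * (m.choose j) * ((A - j).choose (r + m + 1)) := by
          congr 1
          rw [Finset.sum_range_succ]
          simp only [Nat.choose_succ_self, Nat.cast_zero, mul_zero, zero_mul, add_zero]
          rw [Finset.sum_range_succ'
            (fun j => (-1 : ℤ) ^ j * ((m.choose j : ℤ)) * ((A - j).choose (r + m + 1)))]
          simp only [pow_zero, Nat.choose_zero_right, Nat.cast_one, one_mul, Nat.sub_zero]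
          congr 1
          refine Finset.sum_congr rfl fun j hj => ?_
          have h : A - (j + 1) = A - 1 - j := by omega
          rw [h]
      _ = ∑ j ∈ range (m + 1), (-1 : ℤ) ^ j * (m.choose j) * ((A - 1 - j).choose (r + m)) := by
          rw [← Finset.sum_add_distrib]
          refine Finset.sum_congr rfl fun j hj => ?_
          have hj' : j ≤ m := by simpa [Nat.lt_succ_iff] using hj
          have h1 : A - j = (A - 1 - j) + 1 := by omega
          rw [h1, Nat.choose_succ_succ' (A - 1 - j) (r + m)]
          push_cast; ring
      _ = ((A - 1 - m).choose r : ℤ) := hstep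
      _ = ((A - (m + 1)).choose r : ℤ) := by congr 2; omega

-- termwise identity
lemma term_eq (a j t k : ℕ) :
    (a + j + 2 * t + k).choose (j + k) * ((j + k).choose k) * ((a + 2 * t).choose t)
      = (j + t + k).choose k * ((j + t).choose j) * ((a + j + 2 * t + k).choose (j + t + k)) := by
  have h1 : (a + j + 2 * t + k).choose (j + k) * ((j + k).choose k)
      = (a + j + 2 * t + k).choose k * ((a + j + 2 * t).choose j) := by
    have h := Nat.choose_mul (n := a + j + 2 * t + k) (k := j + k) (s := k) (by omega)
    rw [h]; congr 2 <;> omega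
  have h2 : (a + j + 2 * t + k).choose (j + t + k) * ((j + t + k).choose k)
      = (a + j + 2 * t + k).choose k * ((a + j + 2 * t).choose (j + t)) := by
    have h := Nat.choose_mul (n := a + j + 2 * t + k) (k := j + t + k) (s := k) (by omega)
    rw [h]; congr 2 <;> omega
  have h3 : (a + j + 2 * t).choose (j + t) * ((j + t).choose j)
      = (a + j + 2 * t).choose j * ((a + 2 * t).choose t) := by
    have h := Nat.choose_mul (n := a + j + 2 * t) (k := j + t) (s := j) (by omega)
    rw [h]; congr 2 <;> omega
  calc (a + j + 2 * t + k).choose (j + k) * ((j + k).choose k) * ((a + 2 * t).choose t)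
      = (a + j + 2 * t + k).choose k * (((a + j + 2 * t).choose j) * ((a + 2 * t).choose t)) := by
        rw [h1]; ring
    _ = (a + j + 2 * t + k).choose k * ((a + j + 2 * t).choose (j + t)) * ((j + t).choose j) := by
        rw [← h3]; ring
    _ = (a + j + 2 * t + k).choose (j + t + k) * ((j + t + k).choose k) * ((j + t).choose j) := by
        rw [h2]
    _ = (j + t + k).choose k * ((j + t).choose j) * ((a + j + 2 * t + k).choose (j + t + k)) := by
        ring

theorem E_eval (n k i u : ℕ) (hk : k ≤ n) (hiu : i + u ≤ n - k) :
    ∑ j ∈ Finset.range (n - i - u - k + 1), (-1 : ℤ) ^ j *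
        ((2 * n - i - k - j).choose (j + k)) * ((j + k).choose k) *
        ((2 * n - 2 * j - 2 * k - i).choose (n - j - k - i - u)) =
      ((n + u).choose k) * ((n - i - u).choose k) := by
  obtain ⟨m, rfl⟩ : ∃ m, n = k + i + u + m := ⟨n - k - i - u, by omega⟩
  set a : ℕ := i + 2 * u with ha
  set A : ℕ := a + 2 * m + k with hA
  have hrange : k + i + u + m - i - u - k = m := by omega
  rw [hrange]
  have hterm : ∀ j ∈ range (m + 1),
      (-1 : ℤ) ^ j * ((2 * (k + i + u + m) - i - k - j).choose (j + k)) * ((j + k).choose k) *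
        ((2 * (k + i + u + m) - 2 * j - 2 * k - i).choose (k + i + u + m - j - k - i - u))
      = ((m + k).choose k : ℤ) * ((-1 : ℤ) ^ j * (m.choose j) * ((A - j).choose (k + m))) := by
    intro j hj
    have hj' : j ≤ m := by simpa [Nat.lt_succ_iff] using hj
    obtain ⟨t, rfl⟩ : ∃ t, m = j + t := ⟨m - j, by omega⟩
    have e1 : 2 * (k + i + u + (j + t)) - i - k - j = a + j + 2 * t + k := by omega
    have e2 : 2 * (k + i + u + (j + t)) - 2 * j - 2 * k - i = a + 2 * t := by omega
    have e3 : k + i + u + (j + t) - j - k - i - u = t := by omega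
    have e4 : A - j = a + j + 2 * t + k := by omega
    have e5 : j + t + k = k + (j + t) := by omega
    rw [e1, e2, e3, e4]
    have := term_eq a j t k
    have hcast : ((a + j + 2 * t + k).choose (j + k) * ((j + k).choose k) * ((a + 2 * t).choose t) : ℤ)
        = ((j + t + k).choose k * ((j + t).choose j) * ((a + j + 2 * t + k).choose (j + t + k)) : ℤ) := by
      exact_mod_cast congrArg (Nat.cast : ℕ → ℤ) this
    have e6 : (j + t + k).choose k = (j + t + k).choose k := rfl
    calc (-1 : ℤ) ^ j * ((a + j + 2 * t + k).choose (j + k)) * ((j + k).choose k) *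
          ((a + 2 * t).choose t)
        = (-1 : ℤ) ^ j * (((a + j + 2 * t + k).choose (j + k) * ((j + k).choose k) *
            ((a + 2 * t).choose t) : ℕ) : ℤ) := by push_cast; ring
      _ = (-1 : ℤ) ^ j * (((j + t + k).choose k * ((j + t).choose j) *
            ((a + j + 2 * t + k).choose (j + t + k)) : ℕ) : ℤ) := by rw [this]
      _ = ((j + t + k).choose k : ℤ) * ((-1 : ℤ) ^ j * ((j + t).choose j) *
            ((a + j + 2 * t + k).choose (k + (j + t)))) := by
          rw [show k + (j + t) = j + t + k by omega]; push_cast; ring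
  rw [Finset.sum_congr rfl hterm, ← Finset.mul_sum]
  have hmA : m ≤ A := by omega
  rw [key_diff m A k hmA]
  have e7 : A - m = k + i + u + m + u := by omega
  have e8 : k + i + u + m - i - u = k + m := by omega
  rw [e7, e8]
  have e9 : (k + m).choose k = (m + k).choose k := by rw [Nat.add_comm]
  rw [e9]; ring
end

section
/- For integers n, k, i with 1 ≤ k ≤ n and 0 ≤ i ≤ n-k, one has Σ_{j=0}^{n-k} (-1)^j · C(n-1+j, n-k+j) · C(2n-k, n-k-j) · C(n-k+j+i-1, j-1) · C(n-k+j-h-1, j-1) evaluated at h = n-k, i.e. Σ_{j=0}^{n-k} (-1)^j · C(n-1+j, n-k+j) · C(2n-k, n-k-j) · C(n-k+j+i-1, j-1) · C(j-1, j-1), equals (-1)^i · C(n, k-i). -/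
open Finset

-- Lemma V: alternating convolution: sum_{u=0}^P (-1)^u C(a+u,u) C(M,P-u) = C(M-a-1,P)
lemma lemV : ∀ (a P M : ℕ), a + 1 ≤ M →
    ∑ u ∈ range (P+1), (-1:ℤ)^u * ((a+u).choose u) * (M.choose (P-u)) =
      ((M - (a+1)).choose P : ℤ) := by
  intro a
  induction a with
  | zero =>
    intro P
    induction P with
    | zero => intro M hM; simp
    | succ P ih =>
      intro M hM
      rw [Finset.sum_range_succ']
      have h1 : ∀ u ∈ range (P+1), (-1:ℤ)^(u+1) * ((0+(u+1)).choose (u+1)) * (M.choose (P+1-(u+1)))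
          = -((-1:ℤ)^u * ((0+u).choose u) * (M.choose (P-u))) := by
        intro u hu
        simp only [Nat.zero_add, Nat.choose_self]
        have : P + 1 - (u+1) = P - u := by omega
        rw [this]; push_cast; ring
      rw [Finset.sum_congr rfl h1, Finset.sum_neg_distrib, ih M hM]
      have hM1 : M = (M - 1) + 1 := by omega
      have hp : M.choose (P+1) = (M-1).choose P + (M-1).choose (P+1) := by
        conv_lhs => rw [hM1]
        exact Nat.choose_succ_succ' (M-1) P
      simp only [Nat.zero_add, Nat.choose_self, Nat.sub_zero]
      have : M - (0+1) = M - 1 := by omega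
      rw [this, hp]; push_cast; ring
  | succ a iha =>
    intro P
    induction P with
    | zero =>
      intro M hM; simp
    | succ P ih =>
      intro M hM
      rw [Finset.sum_range_succ']
      -- terms: sum_{s<P+1} (-1)^(s+1) C(a+2+s, s+1) C(M, P-s) + C(M,P+1)
      have h1 : ∀ s ∈ range (P+1),
          (-1:ℤ)^(s+1) * ((a+1+(s+1)).choose (s+1)) * (M.choose (P+1-(s+1)))
          = -((-1:ℤ)^s * ((a+1+s).choose s) * (M.choose (P-s)))
            + -((-1:ℤ)^s * ((a+(s+1)).choose (s+1)) * (M.choose (P-s))) := by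
        intro s hs
        have e1 : a+1+(s+1) = (a+1+s) + 1 := by omega
        have e2 : P+1-(s+1) = P - s := by omega
        have hp : (a+1+s+1).choose (s+1) = (a+1+s).choose s + (a+1+s).choose (s+1) :=
          Nat.choose_succ_succ' (a+1+s) s
        have e3 : a + (s+1) = a + 1 + s := by omega
        rw [e1, e2, hp, e3]; push_cast; ring
      rw [Finset.sum_congr rfl h1, Finset.sum_add_distrib, Finset.sum_neg_distrib,
        Finset.sum_neg_distrib, ih M hM]
      -- second sum: relates to lemV a (P+1) M : peel its u=0 term
      have hVa := iha (P+1) M (by omega)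
      rw [Finset.sum_range_succ'] at hVa
      have h2 : ∀ u ∈ range (P+1), (-1:ℤ)^(u+1) * ((a+(u+1)).choose (u+1)) * (M.choose (P+1-(u+1)))
          = -((-1:ℤ)^u * ((a+(u+1)).choose (u+1)) * (M.choose (P-u))) := by
        intro u hu
        have : P+1-(u+1) = P - u := by omega
        rw [this]; push_cast; ring
      rw [Finset.sum_congr rfl h2, Finset.sum_neg_distrib] at hVa
      simp only [pow_zero, Nat.add_zero, Nat.choose_zero_right, Nat.sub_zero, Nat.cast_one,
        one_mul, mul_one] at hVa ⊢
      -- hVa : -∑ u ∈ range (P+1), (-1)^u * C(a+u+1, u+1) * C(M, P-u) + C(M, P+1) = C(M-(a+1), P+1)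
      have hp2 : (M - (a+1)).choose (P+1) = (M-(a+2)).choose P + (M-(a+2)).choose (P+1) := by
        have h : M - (a+1) = (M - (a+2)) + 1 := by omega
        rw [h]; exact Nat.choose_succ_succ' _ P
      have he : M - (a+1+1) = M - (a+2) := by omega
      rw [he]
      have hp2' : ((M - (a+1)).choose (P+1) : ℤ) = ((M-(a+2)).choose P : ℤ) + ((M-(a+2)).choose (P+1) : ℤ) := by
        exact_mod_cast congrArg (Nat.cast : ℕ → ℤ) hp2
      push_cast
      linarith [hVa, hp2']

lemma lemB (k a P : ℕ) (hk : 1 ≤ k) :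
    ∑ u ∈ range (P+1), (-1:ℤ)^u * ((k+a+u).choose (k-1)) * ((a+P+k).choose (P-u))
        * ((a+u).choose u)
      = ((a+P+k).choose (k-1) : ℤ) := by
  have key : ∀ u ∈ range (P+1),
      (-1:ℤ)^u * ((k+a+u).choose (k-1)) * ((a+P+k).choose (P-u)) * ((a+u).choose u)
      = ((a+P+k).choose (k-1) : ℤ) * ((-1)^u * ((a+u).choose u) * ((a+P+1).choose (P-u))) := by
    intro u hu
    rw [Finset.mem_range] at hu
    have hu' : u ≤ P := by omega
    have hnat : (a+P+k).choose (a+k+u) * (a+k+u).choose (k-1)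
        = (a+P+k).choose (k-1) * ((a+P+k) - (k-1)).choose ((a+k+u) - (k-1)) :=
      Nat.choose_mul (by omega)
    have e1 : (a+P+k) - (k-1) = a+P+1 := by omega
    have e2 : (a+k+u) - (k-1) = a+u+1 := by omega
    rw [e1, e2] at hnat
    have e3 : (a+P+k).choose (a+k+u) = (a+P+k).choose (P-u) := by
      have h := Nat.choose_symm (n := a+P+k) (k := a+k+u) (by omega)
      have : a+P+k - (a+k+u) = P - u := by omega
      rw [this] at h; exact h.symm
    have e4 : (a+P+1).choose (a+u+1) = (a+P+1).choose (P-u) := by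
      have h := Nat.choose_symm (n := a+P+1) (k := a+u+1) (by omega)
      have : a+P+1 - (a+u+1) = P - u := by omega
      rw [this] at h; exact h.symm
    rw [e3, e4] at hnat
    have e5 : (k+a+u).choose (k-1) = (a+k+u).choose (k-1) := by
      congr 1; omega
    rw [e5]
    have := congrArg (Nat.cast : ℕ → ℤ) hnat
    push_cast at this ⊢
    linear_combination ((-1:ℤ)^u * ((a+u).choose u : ℤ)) * this
  rw [Finset.sum_congr rfl key, ← Finset.mul_sum, lemV a P (a+P+1) (by omega)]
  have : a + P + 1 - (a+1) = P := by omega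
  rw [this, Nat.choose_self]
  push_cast; ring

lemma lemA (k a : ℕ) (hk : 1 ≤ k) : ∀ M : ℕ,
    ∑ u ∈ range (M+1), (-1:ℤ)^u * ((k+a+u).choose (k-1)) * ((a+M+k+1).choose (M-u))
        * ((a+u).choose u)
      = ((a+M+k+1).choose k : ℤ) - ((a+k).choose k : ℤ) := by
  intro M
  induction M with
  | zero =>
    simp only [Finset.sum_range_one, pow_zero, Nat.add_zero, Nat.choose_zero_right,
      Nat.sub_zero, Nat.choose_self, Nat.cast_one, one_mul, mul_one, Nat.zero_add]
    have hp : (a+k+1).choose k = (a+k).choose (k-1) + (a+k).choose k := by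
      have e2 : k = (k-1)+1 := by omega
      conv_lhs => rw [e2]
      rw [Nat.choose_succ_succ']
      congr 2 <;> omega
    have hp' := congrArg (Nat.cast : ℕ → ℤ) hp
    push_cast at hp' ⊢
    have e5 : k + a = a + k := by omega
    rw [e5] at *
    linarith [hp']
  | succ M ih =>
    set X := a + M + k + 1 with hX
    -- goal sum over range (M+2) with (a+(M+1)+k+1).choose (M+1-u) = (X+1).choose (M+1-u)
    have hgoal : ∀ u ∈ range (M+2),
        (-1:ℤ)^u * ((k+a+u).choose (k-1)) * ((a+(M+1)+k+1).choose (M+1-u)) * ((a+u).choose u)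
        = (-1:ℤ)^u * ((k+a+u).choose (k-1)) * ((X+1).choose (M+1-u)) * ((a+u).choose u) := by
      intro u hu
      have e : a + (M+1) + k + 1 = X + 1 := by omega
      rw [e]
    rw [Finset.sum_congr rfl hgoal]
    have hsplit : ∑ u ∈ range (M+2),
        (-1:ℤ)^u * ((k+a+u).choose (k-1)) * ((X+1).choose (M+1-u)) * ((a+u).choose u)
        = (∑ u ∈ range (M+2),
            (-1:ℤ)^u * ((k+a+u).choose (k-1)) * (X.choose (M+1-u)) * ((a+u).choose u))
          + ∑ u ∈ range (M+1),
            (-1:ℤ)^u * ((k+a+u).choose (k-1)) * (X.choose (M-u)) * ((a+u).choose u) := by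
      rw [Finset.sum_range_succ, Finset.sum_range_succ (n := M+1)
        (f := fun u => (-1:ℤ)^u * ((k+a+u).choose (k-1)) * (X.choose (M+1-u)) * ((a+u).choose u))]
      have hlast : ((X+1).choose (M+1-(M+1)) : ℤ) = (X.choose (M+1-(M+1)) : ℤ) := by
        simp
      have hmain : ∀ u ∈ range (M+1),
          (-1:ℤ)^u * ((k+a+u).choose (k-1)) * ((X+1).choose (M+1-u)) * ((a+u).choose u)
          = (-1:ℤ)^u * ((k+a+u).choose (k-1)) * (X.choose (M+1-u)) * ((a+u).choose u)
            + (-1:ℤ)^u * ((k+a+u).choose (k-1)) * (X.choose (M-u)) * ((a+u).choose u) := by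
        intro u hu
        rw [Finset.mem_range] at hu
        have e : M+1-u = (M-u)+1 := by omega
        rw [e, Nat.choose_succ_succ' X (M-u)]
        push_cast; ring
      rw [Finset.sum_congr rfl hmain, Finset.sum_add_distrib, hlast]
      ring
    rw [hsplit]
    have hB := lemB k a (M+1) hk
    have eB : a + (M+1) + k = X := by omega
    rw [eB] at hB
    rw [hB]
    have hIH : ∑ u ∈ range (M+1),
        (-1:ℤ)^u * ((k+a+u).choose (k-1)) * (X.choose (M-u)) * ((a+u).choose u)
        = ((X.choose k : ℤ)) - ((a+k).choose k : ℤ) := by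
      have e : a + M + k + 1 = X := rfl
      exact ih
    rw [hIH]
    have hp : (a+(M+1)+k+1).choose k = X.choose (k-1) + X.choose k := by
      have e : a+(M+1)+k+1 = X+1 := by omega
      have e2 : k = (k-1)+1 := by omega
      rw [e]; conv_lhs => rw [e2]
      rw [Nat.choose_succ_succ']
      congr 2 <;> omega
    have hp' := congrArg (Nat.cast : ℕ → ℤ) hp
    push_cast at hp' ⊢
    linarith [hp']

lemma lemInner (k m t : ℕ) (hk : 1 ≤ k) (ht : t ≤ m) :
    ∑ u ∈ range m, (-1:ℤ)^(1+u) * ((k+m+u).choose (k-1)) * ((k+2*m).choose (m-1-u))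
        * ((m+u).choose (m+t))
      = (-1:ℤ)^(t+1) * (((k+2*m).choose k : ℤ) - ((m+k+t).choose k : ℤ)) := by
  rcases eq_or_lt_of_le ht with h | h
  · subst h
    have hz : ∑ u ∈ range t, (-1:ℤ)^(1+u) * ((k+t+u).choose (k-1)) * ((k+2*t).choose (t-1-u))
        * ((t+u).choose (t+t)) = 0 := by
      apply Finset.sum_eq_zero
      intro u hu
      rw [Finset.mem_range] at hu
      have : (t+u).choose (t+t) = 0 := Nat.choose_eq_zero_of_lt (by omega)
      rw [this]; push_cast; ring
    rw [hz]
    have e : t + k + t = k + 2*t := by omega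
    rw [e]; ring
  · -- t < m
    have hsplit : (∑ u ∈ Ico 0 t, (-1:ℤ)^(1+u) * ((k+m+u).choose (k-1)) * ((k+2*m).choose (m-1-u))
          * ((m+u).choose (m+t)))
        + (∑ u ∈ Ico t m, (-1:ℤ)^(1+u) * ((k+m+u).choose (k-1)) * ((k+2*m).choose (m-1-u))
          * ((m+u).choose (m+t)))
        = ∑ u ∈ Ico 0 m, (-1:ℤ)^(1+u) * ((k+m+u).choose (k-1)) * ((k+2*m).choose (m-1-u))
          * ((m+u).choose (m+t)) :=
      Finset.sum_Ico_consecutive _ (by omega) (by omega)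
    rw [← Finset.range_eq_Ico, ← Finset.range_eq_Ico] at hsplit
    have hz : ∑ u ∈ range t, (-1:ℤ)^(1+u) * ((k+m+u).choose (k-1)) * ((k+2*m).choose (m-1-u))
        * ((m+u).choose (m+t)) = 0 := by
      apply Finset.sum_eq_zero
      intro u hu
      rw [Finset.mem_range] at hu
      have : (m+u).choose (m+t) = 0 := Nat.choose_eq_zero_of_lt (by omega)
      rw [this]; push_cast; ring
    rw [← hsplit, hz, zero_add, Finset.sum_Ico_eq_sum_range]
    set M := m - 1 - t with hM
    have hmt : m - t = M + 1 := by omega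
    rw [hmt]
    have hterm : ∀ v ∈ range (M+1),
        (-1:ℤ)^(1+(t+v)) * ((k+m+(t+v)).choose (k-1)) * ((k+2*m).choose (m-1-(t+v)))
          * ((m+(t+v)).choose (m+t))
        = (-1:ℤ)^(t+1) * ((-1:ℤ)^v * ((k+(m+t)+v).choose (k-1))
            * (((m+t)+M+k+1).choose (M-v)) * (((m+t)+v).choose v)) := by
      intro v hv
      rw [Finset.mem_range] at hv
      have e1 : k+m+(t+v) = k+(m+t)+v := by omega
      have e2 : k+2*m = (m+t)+M+k+1 := by omega
      have e3 : m-1-(t+v) = M - v := by omega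
      have e4 : (m+(t+v)).choose (m+t) = ((m+t)+v).choose v := by
        have h := Nat.choose_symm (n := (m+t)+v) (k := v) (by omega)
        have e : (m+t)+v - v = m+t := by omega
        rw [e] at h
        rw [← h]; congr 1; omega
      rw [e1, e2, e3, e4]
      have e5 : (-1:ℤ)^(1+(t+v)) = (-1:ℤ)^(t+1) * (-1:ℤ)^v := by
        rw [← pow_add]
        congr 1
        omega
      rw [e5]; ring
    rw [Finset.sum_congr rfl hterm, ← Finset.mul_sum, lemA k (m+t) hk M]
    have e6 : (m+t)+M+k+1 = k+2*m := by omega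
    have e7 : (m+t)+k = m+k+t := by omega
    rw [e6, e7]

lemma lemD (k : ℕ) : ∀ (i x : ℕ),
    ∑ t ∈ range (i+1), (-1:ℤ)^t * (i.choose t) * ((x+t).choose k)
      = (-1:ℤ)^i * (if i ≤ k then ((x.choose (k-i)) : ℤ) else 0) := by
  intro i
  induction i with
  | zero => intro x; simp
  | succ i ih =>
    intro x
    rw [Finset.sum_range_succ']
    have h1 : ∀ s ∈ range (i+1),
        (-1:ℤ)^(s+1) * ((i+1).choose (s+1)) * ((x+(s+1)).choose k)
        = -((-1:ℤ)^s * (i.choose s) * (((x+1)+s).choose k))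
          + -((-1:ℤ)^s * (i.choose (s+1)) * ((x+1+s).choose k)) := by
      intro s hs
      rw [Nat.choose_succ_succ i s]
      have e : x+(s+1) = x+1+s := by omega
      rw [e]; push_cast; ring
    rw [Finset.sum_congr rfl h1, Finset.sum_add_distrib, Finset.sum_neg_distrib,
      Finset.sum_neg_distrib, ih (x+1)]
    -- handle ∑ h
    have hx := ih x
    rw [Finset.sum_range_succ'] at hx
    have h2 : ∀ s ∈ range i,
        (-1:ℤ)^(s+1) * (i.choose (s+1)) * ((x+(s+1)).choose k)
        = -((-1:ℤ)^s * (i.choose (s+1)) * ((x+1+s).choose k)) := by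
      intro s hs
      have e : x+(s+1) = x+1+s := by omega
      rw [e]; push_cast; ring
    rw [Finset.sum_congr rfl h2, Finset.sum_neg_distrib] at hx
    have h3 : ∑ s ∈ range (i+1), (-1:ℤ)^s * (i.choose (s+1)) * ((x+1+s).choose k)
        = ∑ s ∈ range i, (-1:ℤ)^s * (i.choose (s+1)) * ((x+1+s).choose k) := by
      rw [Finset.sum_range_succ, Nat.choose_succ_self]
      push_cast; ring
    rw [h3]
    simp only [pow_zero, Nat.choose_zero_right, Nat.add_zero, Nat.cast_one, one_mul,
      mul_one] at hx ⊢
    -- hx : -∑ + C(x,k) = (-1)^i * ite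
    by_cases hik : i + 1 ≤ k
    · have hik' : i ≤ k := by omega
      rw [if_pos hik'] at hx
      rw [if_pos hik', if_pos hik]
      have hp : (x+1).choose (k-i) = x.choose (k-(i+1)) + x.choose (k-i) := by
        have e : k - i = (k-(i+1))+1 := by omega
        rw [e, Nat.choose_succ_succ']
      have hp' := congrArg (Nat.cast : ℕ → ℤ) hp
      push_cast at hp' hx ⊢
      have hsq : (-1:ℤ)^(i+1) = -(-1:ℤ)^i := by ring
      rw [hsq]
      linear_combination hx - (-1:ℤ)^i * hp'
    · by_cases hik2 : i ≤ k
      · have hie : i = k := by omega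
        rw [if_pos hik2] at hx
        rw [if_pos hik2, if_neg hik]
        subst hie
        simp only [Nat.sub_self, Nat.choose_zero_right] at *
        push_cast at hx ⊢
        linarith [hx]
      · rw [if_neg hik2] at hx
        rw [if_neg hik2, if_neg hik]
        push_cast at hx ⊢
        linarith [hx]

theorem Cbar_top (n k i : ℕ) (hk1 : 1 ≤ k) (hkn : k ≤ n) (hi1 : 1 ≤ i)
    (hi : i ≤ n - k) :
    ∑ j ∈ Finset.Icc 1 (n - k), (-1 : ℤ) ^ j *
        ((n - 1 + j).choose (n - k + j)) * ((2 * n - k).choose (n - k - j)) *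
        ((n - k + j + i - 1).choose (j - 1)) =
      (-1) ^ i * icho (n : ℤ) ((k : ℤ) - (i : ℤ)) := by
  obtain ⟨m, rfl⟩ : ∃ m, n = k + m := ⟨n - k, by omega⟩
  have hmk : k + m - k = m := by omega
  rw [hmk] at hi ⊢
  have him : i ≤ m := hi
  have hm1 : 1 ≤ m := le_trans hi1 him
  -- Icc to range
  rw [← Finset.Ico_add_one_right_eq_Icc, Finset.sum_Ico_eq_sum_range]
  have hr : m + 1 - 1 = m := by omega
  rw [hr]
  -- termwise normalization
  have h1 : ∀ u ∈ range m,
      (-1:ℤ)^(1+u) * ((k+m-1+(1+u)).choose (m+(1+u))) * ((2*(k+m)-k).choose (m-(1+u)))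
        * ((m+(1+u)+i-1).choose (1+u-1))
      = (-1:ℤ)^(1+u) * ((k+m+u).choose (k-1)) * ((k+2*m).choose (m-1-u))
        * ((m+u+i).choose (m+i)) := by
    intro u hu
    have e1 : k+m-1+(1+u) = k+m+u := by omega
    have e2 : (k+m+u).choose (m+(1+u)) = (k+m+u).choose (k-1) := by
      have h := Nat.choose_symm (n := k+m+u) (k := m+(1+u)) (by omega)
      rw [← h]; congr 1; omega
    have e3 : 2*(k+m)-k = k+2*m := by omega
    have e4 : m-(1+u) = m-1-u := by omega
    have e5 : m+(1+u)+i-1 = m+u+i := by omega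
    have e6 : 1+u-1 = u := by omega
    have e7 : (m+u+i).choose u = (m+u+i).choose (m+i) := by
      have h := Nat.choose_symm (n := m+u+i) (k := u) (by omega)
      rw [← h]; congr 1; omega
    rw [e1, e3, e4, e5, e6, e2, e7]
  rw [Finset.sum_congr rfl h1]
  -- Vandermonde expansion
  have h2 : ∀ u ∈ range m,
      (-1:ℤ)^(1+u) * ((k+m+u).choose (k-1)) * ((k+2*m).choose (m-1-u))
        * ((m+u+i).choose (m+i))
      = ∑ p ∈ range (m+i+1),
          (-1:ℤ)^(1+u) * ((k+m+u).choose (k-1)) * ((k+2*m).choose (m-1-u))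
            * ((i.choose p : ℤ) * ((m+u).choose (m+i-p) : ℤ)) := by
    intro u hu
    have hvan : ((m+u+i).choose (m+i) : ℤ)
        = ∑ p ∈ range (m+i+1), ((i.choose p : ℤ) * ((m+u).choose (m+i-p) : ℤ)) := by
      have e : m+u+i = i + (m+u) := by omega
      rw [e, Nat.add_choose_eq, Finset.Nat.sum_antidiagonal_eq_sum_range_succ_mk]
      push_cast
      rfl
    rw [hvan, Finset.mul_sum]
  rw [Finset.sum_congr rfl h2, Finset.sum_comm]
  -- factor out C(i,p)
  have h3 : ∀ p ∈ range (m+i+1),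
      (∑ u ∈ range m, (-1:ℤ)^(1+u) * ((k+m+u).choose (k-1)) * ((k+2*m).choose (m-1-u))
          * ((i.choose p : ℤ) * ((m+u).choose (m+i-p) : ℤ)))
      = (i.choose p : ℤ) * ∑ u ∈ range m,
          (-1:ℤ)^(1+u) * ((k+m+u).choose (k-1)) * ((k+2*m).choose (m-1-u))
            * ((m+u).choose (m+i-p) : ℤ) := by
    intro p hp
    rw [Finset.mul_sum]
    apply Finset.sum_congr rfl
    intro u hu
    ring
  rw [Finset.sum_congr rfl h3]
  -- truncate to range (i+1)
  have htrunc : ∑ p ∈ range (i+1), ((i.choose p : ℤ) * ∑ u ∈ range m,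
          (-1:ℤ)^(1+u) * ((k+m+u).choose (k-1)) * ((k+2*m).choose (m-1-u))
            * ((m+u).choose (m+i-p) : ℤ))
      = ∑ p ∈ range (m+i+1), ((i.choose p : ℤ) * ∑ u ∈ range m,
          (-1:ℤ)^(1+u) * ((k+m+u).choose (k-1)) * ((k+2*m).choose (m-1-u))
            * ((m+u).choose (m+i-p) : ℤ)) := by
    apply Finset.sum_subset
    · intro x hx; rw [Finset.mem_range] at *; omega
    · intro p hp hnp
      rw [Finset.mem_range] at hp hnp
      have : i.choose p = 0 := Nat.choose_eq_zero_of_lt (by omega)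
      rw [this]
      push_cast
      ring
  rw [← htrunc]
  -- apply lemInner per p
  have h4 : ∀ p ∈ range (i+1),
      ((i.choose p : ℤ) * ∑ u ∈ range m,
          (-1:ℤ)^(1+u) * ((k+m+u).choose (k-1)) * ((k+2*m).choose (m-1-u))
            * ((m+u).choose (m+i-p) : ℤ))
      = (i.choose p : ℤ) * ((-1:ℤ)^((i-p)+1)
          * (((k+2*m).choose k : ℤ) - ((m+k+(i-p)).choose k : ℤ))) := by
    intro p hp
    rw [Finset.mem_range] at hp
    congr 1
    have e : ∀ u ∈ range m,
        (-1:ℤ)^(1+u) * ((k+m+u).choose (k-1)) * ((k+2*m).choose (m-1-u))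
          * ((m+u).choose (m+i-p) : ℤ)
        = (-1:ℤ)^(1+u) * ((k+m+u).choose (k-1)) * ((k+2*m).choose (m-1-u))
          * ((m+u).choose (m+(i-p)) : ℤ) := by
      intro u hu
      have : m+i-p = m+(i-p) := by omega
      rw [this]
    rw [Finset.sum_congr rfl e]
    exact lemInner k m (i-p) hk1 (by omega)
  rw [Finset.sum_congr rfl h4]
  -- reflect
  rw [← Finset.sum_range_reflect (fun p => (i.choose p : ℤ) * ((-1:ℤ)^((i-p)+1)
          * (((k+2*m).choose k : ℤ) - ((m+k+(i-p)).choose k : ℤ)))) (i+1)]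
  have h5 : ∀ t ∈ range (i+1),
      ((i.choose (i+1-1-t) : ℤ) * ((-1:ℤ)^((i-(i+1-1-t))+1)
          * (((k+2*m).choose k : ℤ) - ((m+k+(i-(i+1-1-t))).choose k : ℤ))))
      = -((-1:ℤ)^t * (i.choose t : ℤ) * ((k+2*m).choose k : ℤ))
        + (-1:ℤ)^t * (i.choose t : ℤ) * ((m+k+t).choose k : ℤ) := by
    intro t ht
    rw [Finset.mem_range] at ht
    have e1 : i+1-1-t = i-t := by omega
    have e2 : i-(i-t) = t := by omega
    have e3 : i.choose (i-t) = i.choose t := Nat.choose_symm (by omega)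
    rw [e1, e2, e3]
    push_cast
    ring
  rw [Finset.sum_congr rfl h5, Finset.sum_add_distrib, Finset.sum_neg_distrib]
  have h6 : ∑ t ∈ range (i+1), (-1:ℤ)^t * (i.choose t : ℤ) * ((k+2*m).choose k : ℤ)
      = (∑ t ∈ range (i+1), (-1:ℤ)^t * (i.choose t : ℤ)) * ((k+2*m).choose k : ℤ) := by
    rw [Finset.sum_mul]
  rw [h6, Int.alternating_sum_range_choose_of_ne (by omega), lemD k i (m+k)]
  -- now the RHS with icho
  have hicho : icho ((k+m : ℕ) : ℤ) ((k:ℤ) - (i:ℤ))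
      = if i ≤ k then (((m+k).choose (k-i) : ℕ) : ℤ) else 0 := by
    unfold icho
    by_cases hik : i ≤ k
    · rw [if_pos hik]
      have hb : (0:ℤ) ≤ (k:ℤ) - (i:ℤ) := by
        have : (i:ℤ) ≤ (k:ℤ) := by exact_mod_cast hik
        omega
      have hba : (k:ℤ) - (i:ℤ) ≤ ((k+m : ℕ) : ℤ) := by push_cast; omega
      rw [if_pos hb, if_pos hba]
      have e1 : (((k+m : ℕ) : ℤ)).toNat = k+m := by omega
      have e2 : ((k:ℤ) - (i:ℤ)).toNat = k - i := by omega
      rw [e1, e2]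
      congr 2
      omega
    · rw [if_neg hik]
      have hb : ¬ ((0:ℤ) ≤ (k:ℤ) - (i:ℤ)) := by
        have : (k:ℤ) < (i:ℤ) := by exact_mod_cast Nat.lt_of_not_le hik
        omega
      rw [if_neg hb]
      have hne : ¬ (((k+m : ℕ) : ℤ) = (k:ℤ) - (i:ℤ)) := by
        push_cast
        omega
      rw [if_neg hne]
  rw [hicho]
  ring
end

section
/- In the ring ℤ[q], for nonnegative integers i, j with j ≤ i, one has q^{i + C(j,2)} · qbinom(i, j) = q^{C(j+2,2)} · qbinom(i, j+1) + q^{C(j+1,2)} · qbinom(i, j) − q^{C(j+2,2)} · qbinom(i-1, j+1) − q^{C(j+1,2)} · qbinom(i-1, j), where C(m,2) = m(m-1)/2 and qbinom denotes the Gaussian binomial coefficient. -/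
open Polynomial

/-- Gaussian binomial coefficients in `ℤ[q]`, for natural indices. -/
noncomputable def qbinN : ℕ → ℕ → Polynomial ℤ
  | _, 0 => 1
  | 0, _ + 1 => 0
  | n + 1, k + 1 => qbinN n k + X ^ (k + 1) * qbinN n (k + 1)

/-- Gaussian binomial coefficients in `ℤ[q]`, extended by `0` outside `0 ≤ k ≤ n`. -/
noncomputable def qbin (n k : ℤ) : Polynomial ℤ :=
  if 0 ≤ k ∧ k ≤ n then qbinN n.toNat k.toNat else 0

lemma qbinN_zero (n : ℕ) : qbinN n 0 = 1 := by cases n <;> rfl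

lemma qbinN_of_lt : ∀ n k : ℕ, n < k → qbinN n k = 0
  | 0, _ + 1, _ => rfl
  | n + 1, k + 1, h => by
      simp [qbinN, qbinN_of_lt n k (by omega), qbinN_of_lt n (k+1) (by omega)]

lemma qbinN_self : ∀ n : ℕ, qbinN n n = 1
  | 0 => rfl
  | n + 1 => by
      simp [qbinN, qbinN_self n, qbinN_of_lt n (n+1) (by omega)]

lemma qbinN_aux : ∀ n : ℕ, ∀ k : ℕ, k ≤ n →
    qbinN n k + X ^ (k+1) * qbinN n (k+1)
      = X ^ (n - k) * qbinN n k + qbinN n (k+1) := by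
  intro n
  induction n with
  | zero => intro k hk; interval_cases k; simp [qbinN]
  | succ m ih =>
    intro k hk
    rcases Nat.lt_or_ge k (m+1) with h | h
    · rcases k with _ | k'
      · have ihm := ih 0 (by omega)
        simp only [qbinN, qbinN_zero, Nat.sub_zero] at ihm ⊢
        linear_combination (X : Polynomial ℤ) * ihm
      · obtain ⟨d, rfl⟩ : ∃ d, m = k' + 1 + d := ⟨m - (k'+1), by omega⟩
        have ih1 := ih k' (by omega)
        have ih2 := ih (k'+1) (by omega)
        simp only [show k' + 1 + d - k' = d + 1 from by omega,
          show k' + 1 + d - (k' + 1) = d from by omega] at ih1 ih2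
        simp only [qbinN, show k' + 1 + d + 1 - (k' + 1) = d + 1 from by omega]
        linear_combination ih1 + (X:Polynomial ℤ)^(k'+2) * ih2
    · have hk' : k = m + 1 := by omega
      subst hk'
      simp [qbinN_self, qbinN_of_lt (m+1) (m+2) (by omega)]

lemma qbinN_pascal2 (n k : ℕ) :
    qbinN (n+1) (k+1) = X ^ (n - k) * qbinN n k + qbinN n (k+1) := by
  rcases Nat.lt_or_ge n k with h | h
  · simp [qbinN_of_lt (n+1) (k+1) (by omega), qbinN_of_lt n k h,
      qbinN_of_lt n (k+1) (by omega)]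
  · show qbinN n k + X ^ (k + 1) * qbinN n (k + 1) = _
    exact qbinN_aux n k h

lemma qbin_natCast (a b : ℕ) : qbin (a : ℤ) (b : ℤ) = qbinN a b := by
  unfold qbin
  split
  · simp
  · rename_i hcond
    rw [qbinN_of_lt a b (by omega)]

lemma choose_two_succ (j : ℕ) : (j + 1).choose 2 = j.choose 2 + j := by
  show (j + 1).choose (1 + 1) = _
  rw [Nat.choose_succ_succ, Nat.choose_one_right]
  norm_num
  omega

theorem qbin_four_term (i j : ℕ) (h : j ≤ i) :
    X ^ (i + j.choose 2) * qbin (i : ℤ) (j : ℤ) =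
      X ^ ((j + 2).choose 2) * qbin (i : ℤ) ((j : ℤ) + 1) +
        X ^ ((j + 1).choose 2) * qbin (i : ℤ) (j : ℤ) -
        X ^ ((j + 2).choose 2) * qbin ((i : ℤ) - 1) ((j : ℤ) + 1) -
        X ^ ((j + 1).choose 2) * qbin ((i : ℤ) - 1) (j : ℤ) := by
  have hc1 : (j + 1).choose 2 = j.choose 2 + j := choose_two_succ j
  have hc2 : (j + 2).choose 2 = j.choose 2 + 2*j + 1 := by
    have h1 := choose_two_succ (j + 1)
    have h2 := choose_two_succ j
    rw [show j + 1 + 1 = j + 2 from rfl] at h1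
    omega
  have hcast : ((j : ℤ) + 1) = ((j + 1 : ℕ) : ℤ) := by push_cast; ring
  rcases h.lt_or_eq with hlt | rfl
  · obtain ⟨n, rfl⟩ : ∃ n, i = n + 1 := ⟨i - 1, by omega⟩
    have hj : j ≤ n := by omega
    have hcast2 : ((n + 1 : ℕ) : ℤ) - 1 = ((n : ℕ) : ℤ) := by push_cast; ring
    rw [hcast, hcast2, qbin_natCast, qbin_natCast, qbin_natCast, qbin_natCast]
    have p2 : qbinN (n+1) (j+1) = X ^ (n - j) * qbinN n j + qbinN n (j+1) :=
      qbinN_pascal2 n j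
    obtain ⟨d, rfl⟩ : ∃ d, n = j + d := ⟨n - j, by omega⟩
    rw [show j + d - j = d from by omega] at p2
    rcases j with _ | m
    · -- j = 0
      rw [hc1, hc2, p2]
      simp only [qbinN_zero]
      ring
    · -- j = m + 1
      have p1 : qbinN (m+1+d+1) (m+1)
          = X ^ (d+1) * qbinN (m+1+d) m + qbinN (m+1+d) (m+1) := by
        have := qbinN_pascal2 (m+1+d) m
        rwa [show m + 1 + d - m = d + 1 from by omega] at this
      have pdef : qbinN (m+1+d+1) (m+1)
          = qbinN (m+1+d) m + X^(m+1) * qbinN (m+1+d) (m+1) := rfl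
      rw [hc1, hc2]
      linear_combination X^(m+1+d+1 + (m+1).choose 2) * pdef
        - X^((m+1).choose 2 + (m+1)) * p1
        - X^((m+1).choose 2 + 2*(m+1) + 1) * p2
  · -- j = i
    rw [hcast, qbin_natCast, qbin_natCast, qbinN_self, qbinN_of_lt j (j+1) (by omega)]
    have h1 : qbin ((j:ℤ) - 1) (((j + 1 : ℕ)) : ℤ) = 0 := by
      unfold qbin; rw [if_neg (by push_cast; omega)]
    have h2 : qbin ((j:ℤ) - 1) (j:ℤ) = 0 := by
      unfold qbin
      rw [if_neg (by omega)]
    rw [h1, h2, hc1]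
    ring
end

section
/- Define D^{n,k}_{h,i} = Σ_{j=i}^{n-k} (-1)^j · C(n-1+j, n-k+j) · C(2n-k, n-k-j) · A^{n-k+j,j}_{h,i}, where A^{m,l}_{h,i} = C(m, l+h)·C(m, l-i) − C(m, l+h+1)·C(m, l-i-1). Then for 0 ≤ i ≤ h ≤ n-k and 2 ≤ k ≤ n one has D^{n,k}_{h,i} = (-1)^{n+k+h+i} · (C(n+i-1, k-1)·C(n-h-1, k-1) − C(n+i, k-1)·C(n-h-2, k-1)). -/
lemma icho_coe (x y : ℕ) : icho (x : ℤ) (y : ℤ) = (x.choose y : ℤ) := by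
  unfold icho
  rw [if_pos (by positivity)]
  split_ifs with h
  · simp
  · rw [Nat.choose_eq_zero_of_lt (by exact_mod_cast not_le.mp h)]; simp

lemma icho_neg_s14 {A B : ℤ} (hB : B < 0) (hA : 0 ≤ A) : icho A B = 0 := by
  unfold icho; rw [if_neg (by omega), if_neg (by omega)]

lemma icho_gt_s14 {A B : ℤ} (hB : 0 ≤ B) (hAB : A < B) : icho A B = 0 := by
  unfold icho; rw [if_pos hB, if_neg (by omega)]

lemma icho_zero {A : ℤ} (hA : 0 ≤ A) : icho A 0 = 1 := by
  unfold icho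
  rw [if_pos le_rfl, if_pos hA]
  simp

lemma icho_self {A : ℤ} (hA : 0 ≤ A) : icho A A = 1 := by
  lift A to ℕ using hA
  rw [icho_coe, Nat.choose_self, Nat.cast_one]

lemma ichoL (M r : ℤ) (hM : 0 ≤ M) : r * icho M r = (M - r + 1) * icho M (r - 1) := by
  rcases lt_trichotomy r 0 with h | h | h
  · rw [icho_neg_s14 h hM, icho_neg_s14 (by omega) hM]; ring
  · subst h
    rw [icho_neg_s14 (show (0:ℤ) - 1 < 0 by norm_num) hM]; ring
  · lift M to ℕ using hM
    obtain ⟨R, rfl⟩ : ∃ R : ℕ, r = (R : ℤ) + 1 := ⟨(r - 1).toNat, by omega⟩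
    rw [show ((R : ℤ) + 1) - 1 = (R : ℤ) by ring,
      show ((R : ℤ) + 1) = ((R + 1 : ℕ) : ℤ) by push_cast; ring, icho_coe, icho_coe]
    by_cases hRM : R ≤ M
    · have := Nat.choose_succ_right_eq M R
      zify [hRM] at this
      push_cast
      linarith [this]
    · rw [Nat.choose_eq_zero_of_lt (by omega), Nat.choose_eq_zero_of_lt (by omega)]
      ring

lemma ichoP (M r : ℤ) (hM : 0 ≤ M) : (r + 1) * icho (M + 1) (r + 1) = (M + 1) * icho M r := by
  rcases lt_trichotomy r (-1) with h | h | h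
  · rw [icho_neg_s14 (by omega) (by omega), icho_neg_s14 (by omega) hM]; ring
  · subst h
    rw [show (-1 : ℤ) + 1 = 0 by ring, icho_neg_s14 (show (-1:ℤ) < 0 by norm_num) hM]; ring
  · lift M to ℕ using hM
    lift r to ℕ using (by omega)
    rw [show (M : ℤ) + 1 = ((M + 1 : ℕ) : ℤ) by push_cast; ring,
      show (r : ℤ) + 1 = ((r + 1 : ℕ) : ℤ) by push_cast; ring, icho_coe, icho_coe]
    have := Nat.add_one_mul_choose_eq M r
    push_cast [Nat.succ_eq_add_one] at this ⊢
    linarith [this]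

lemma ichoU (x r : ℤ) (hx : 0 ≤ x) (hr : 0 ≤ r) :
    (x + 1 - r) * icho (x + 1) r = (x + 1) * icho x r := by
  lift x to ℕ using hx
  lift r to ℕ using hr
  rw [show (x : ℤ) + 1 = ((x + 1 : ℕ) : ℤ) by push_cast; ring, icho_coe, icho_coe]
  by_cases hrx : r ≤ x + 1
  · have := Nat.choose_mul_succ_eq x r
    zify [hrx] at this
    push_cast
    linarith [this]
  · rw [Nat.choose_eq_zero_of_lt (by omega), Nat.choose_eq_zero_of_lt (by omega)]
    ring

def ff (m k a b j : ℕ) : ℤ :=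
  (-1) ^ j * icho ((m : ℤ) + k - 1 + j) ((k : ℤ) - 1) * icho (2 * (m : ℤ) + k) ((m : ℤ) - j)
    * icho ((m : ℤ) + j) ((j : ℤ) + a) * icho ((m : ℤ) + j) ((j : ℤ) - b)

lemma ff_eq_zero_of_lt {m k a b j : ℕ} (h : j < b) : ff m k a b j = 0 := by
  unfold ff
  rw [icho_neg_s14 (A := (m : ℤ) + j) (B := (j : ℤ) - b) (by omega) (by positivity)]
  ring

lemma ff_eq_zero_top {m k b j : ℕ} (a : ℕ) (ha : m + 1 ≤ a) (hj : j ≤ m) :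
    ff m k a b j = 0 := by
  unfold ff
  rw [icho_gt_s14 (B := (j : ℤ) + a) (by positivity) (by omega)]
  ring

lemma ff_eq_zero_succ {m k a b : ℕ} : ff m k a b (m + 1) = 0 := by
  unfold ff
  rw [icho_neg_s14 (B := (m : ℤ) - (↑(m + 1))) (by push_cast; omega) (by positivity)]
  ring

lemma I2a (m k a b j : ℕ) (ha : 1 ≤ a) :
    ((m : ℤ) - a + 1) * ff m k (a - 1) b j = ((j : ℤ) + a) * ff m k a b j := by
  have h := ichoL ((m : ℤ) + j) ((j : ℤ) + a) (by positivity)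
  unfold ff
  rw [show ((j : ℤ) + ((a - 1 : ℕ) : ℤ)) = (j : ℤ) + a - 1 by omega]
  linear_combination (-(-1 : ℤ) ^ j * icho ((m : ℤ) + k - 1 + j) ((k : ℤ) - 1) *
    icho (2 * (m : ℤ) + k) ((m : ℤ) - j) * icho ((m : ℤ) + j) ((j : ℤ) - b)) * h

lemma I2b (m k a b j : ℕ) :
    ((m : ℤ) + b + 1) * ff m k a (b + 1) j = ((j : ℤ) - b) * ff m k a b j := by
  have h := ichoL ((m : ℤ) + j) ((j : ℤ) - b) (by positivity)
  unfold ff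
  rw [show ((j : ℤ) - ((b + 1 : ℕ) : ℤ)) = (j : ℤ) - b - 1 by push_cast; ring]
  linear_combination (-(-1 : ℤ) ^ j * icho ((m : ℤ) + k - 1 + j) ((k : ℤ) - 1) *
    icho (2 * (m : ℤ) + k) ((m : ℤ) - j) * icho ((m : ℤ) + j) ((j : ℤ) + a)) * h

lemma I1 (m k a j : ℕ) (hk : 1 ≤ k) (ham : a < m) (hj : j ≤ m) :
    ((m:ℤ)+a+1)^2*((m:ℤ)+k-a-1) * ff m k (a+1) (a+1) j
      - ((m:ℤ)+a+1)*((m:ℤ)+k+a)*((m:ℤ)-a) * ff m k a a j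
    = (2*(a:ℤ)+1)*(((j:ℤ)+1+((m:ℤ)+k))*((j:ℤ)+1-a) * ff m k a a (j+1)
      - ((j:ℤ)+((m:ℤ)+k))*((j:ℤ)-a) * ff m k a a j) := by
  by_cases haj : j < a
  · rw [ff_eq_zero_of_lt (show j < a+1 by omega), ff_eq_zero_of_lt haj]
    by_cases h2 : j + 1 < a
    · rw [ff_eq_zero_of_lt h2]; ring
    · rw [show (j:ℤ)+1-(a:ℤ) = 0 by omega]; ring
  · push_neg at haj
    have hmj : (0:ℤ) ≤ (m:ℤ) + j := by positivity
    have b1 : ((j:ℤ)+a+1) * icho ((m:ℤ)+j) ((j:ℤ)+((a:ℤ)+1))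
        = ((m:ℤ)-a) * icho ((m:ℤ)+j) ((j:ℤ)+a) := by
      have h := ichoL ((m:ℤ)+j) ((j:ℤ)+a+1) hmj
      rw [show (j:ℤ)+(a:ℤ)+1-1 = (j:ℤ)+a by ring] at h
      rw [show (j:ℤ)+((a:ℤ)+1) = (j:ℤ)+a+1 by ring]
      linear_combination h
    have b2 : ((m:ℤ)+a+1) * icho ((m:ℤ)+j) ((j:ℤ)-((a:ℤ)+1))
        = ((j:ℤ)-a) * icho ((m:ℤ)+j) ((j:ℤ)-a) := by
      have h := ichoL ((m:ℤ)+j) ((j:ℤ)-a) hmj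
      rw [show (j:ℤ)-((a:ℤ)+1) = (j:ℤ)-a-1 by ring]
      linear_combination -h
    have b3 : ((m:ℤ)+j+1) * icho ((m:ℤ)+k-1+((j:ℤ)+1)) ((k:ℤ)-1)
        = ((m:ℤ)+k+j) * icho ((m:ℤ)+k-1+j) ((k:ℤ)-1) := by
      have h := ichoU ((m:ℤ)+k-1+j) ((k:ℤ)-1) (by omega) (by omega)
      rw [show (m:ℤ)+k-1+((j:ℤ)+1) = (m:ℤ)+k-1+j+1 by ring]
      linear_combination h
    have b4 : ((m:ℤ)+k+j+1) * icho (2*(m:ℤ)+k) ((m:ℤ)-((j:ℤ)+1))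
        = ((m:ℤ)-j) * icho (2*(m:ℤ)+k) ((m:ℤ)-j) := by
      have h := ichoL (2*(m:ℤ)+k) ((m:ℤ)-j) (by positivity)
      rw [show (m:ℤ)-((j:ℤ)+1) = (m:ℤ)-j-1 by ring]
      linear_combination -h
    have b5 : ((j:ℤ)+a+1) * icho ((m:ℤ)+((j:ℤ)+1)) ((j:ℤ)+1+a)
        = ((m:ℤ)+j+1) * icho ((m:ℤ)+j) ((j:ℤ)+a) := by
      have h := ichoP ((m:ℤ)+j) ((j:ℤ)+a) hmj
      rw [show (m:ℤ)+((j:ℤ)+1) = (m:ℤ)+j+1 by ring, show (j:ℤ)+1+(a:ℤ) = (j:ℤ)+a+1 by ring]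
      linear_combination h
    have b6 : ((j:ℤ)+1-a) * icho ((m:ℤ)+((j:ℤ)+1)) ((j:ℤ)+1-a)
        = ((m:ℤ)+j+1) * icho ((m:ℤ)+j) ((j:ℤ)-a) := by
      have h := ichoP ((m:ℤ)+j) ((j:ℤ)-a) hmj
      rw [show (m:ℤ)+((j:ℤ)+1) = (m:ℤ)+j+1 by ring, show (j:ℤ)+1-(a:ℤ) = (j:ℤ)-a+1 by ring]
      linear_combination h
    have p1 : (((j:ℤ)+a+1)*((m:ℤ)+a+1))
          * (icho ((m:ℤ)+j) ((j:ℤ)+((a:ℤ)+1)) * icho ((m:ℤ)+j) ((j:ℤ)-((a:ℤ)+1)))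
        = (((m:ℤ)-a)*((j:ℤ)-a)) * (icho ((m:ℤ)+j) ((j:ℤ)+a) * icho ((m:ℤ)+j) ((j:ℤ)-a)) := by
      linear_combination (((m:ℤ)+a+1) * icho ((m:ℤ)+j) ((j:ℤ)-((a:ℤ)+1))) * b1
        + (((m:ℤ)-a) * icho ((m:ℤ)+j) ((j:ℤ)+a)) * b2
    have q1 : (((m:ℤ)+j+1)*((m:ℤ)+k+j+1))
          * (icho ((m:ℤ)+k-1+((j:ℤ)+1)) ((k:ℤ)-1) * icho (2*(m:ℤ)+k) ((m:ℤ)-((j:ℤ)+1)))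
        = (((m:ℤ)+k+j)*((m:ℤ)-j))
          * (icho ((m:ℤ)+k-1+j) ((k:ℤ)-1) * icho (2*(m:ℤ)+k) ((m:ℤ)-j)) := by
      linear_combination (((m:ℤ)+k+j+1) * icho (2*(m:ℤ)+k) ((m:ℤ)-((j:ℤ)+1))) * b3
        + (((m:ℤ)+k+j) * icho ((m:ℤ)+k-1+j) ((k:ℤ)-1)) * b4
    have q2 : (((j:ℤ)+a+1)*((j:ℤ)+1-a))
          * (icho ((m:ℤ)+((j:ℤ)+1)) ((j:ℤ)+1+a) * icho ((m:ℤ)+((j:ℤ)+1)) ((j:ℤ)+1-a))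
        = ((m:ℤ)+j+1)^2 * (icho ((m:ℤ)+j) ((j:ℤ)+a) * icho ((m:ℤ)+j) ((j:ℤ)-a)) := by
      linear_combination (((j:ℤ)+1-a) * icho ((m:ℤ)+((j:ℤ)+1)) ((j:ℤ)+1-a)) * b5
        + (((m:ℤ)+j+1) * icho ((m:ℤ)+j) ((j:ℤ)+a)) * b6
    have p2 : (((m:ℤ)+j+1)*((m:ℤ)+k+j+1)*((j:ℤ)+a+1)*((j:ℤ)+1-a))
          * (icho ((m:ℤ)+k-1+((j:ℤ)+1)) ((k:ℤ)-1) * icho (2*(m:ℤ)+k) ((m:ℤ)-((j:ℤ)+1))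
             * icho ((m:ℤ)+((j:ℤ)+1)) ((j:ℤ)+1+a) * icho ((m:ℤ)+((j:ℤ)+1)) ((j:ℤ)+1-a))
        = (((m:ℤ)+k+j)*((m:ℤ)-j)*((m:ℤ)+j+1)^2)
          * (icho ((m:ℤ)+k-1+j) ((k:ℤ)-1) * icho (2*(m:ℤ)+k) ((m:ℤ)-j)
             * icho ((m:ℤ)+j) ((j:ℤ)+a) * icho ((m:ℤ)+j) ((j:ℤ)-a)) := by
      linear_combination (((j:ℤ)+a+1)*((j:ℤ)+1-a)
          * (icho ((m:ℤ)+((j:ℤ)+1)) ((j:ℤ)+1+a) * icho ((m:ℤ)+((j:ℤ)+1)) ((j:ℤ)+1-a))) * q1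
        + (((m:ℤ)+k+j)*((m:ℤ)-j)
          * (icho ((m:ℤ)+k-1+j) ((k:ℤ)-1) * icho (2*(m:ℤ)+k) ((m:ℤ)-j))) * q2
    have hP : (((j:ℤ)+a+1)*((m:ℤ)+a+1)*((m:ℤ)+j+1)*((m:ℤ)+k+j+1)*((j:ℤ)+1-a)) ≠ 0 := by
      refine ne_of_gt (mul_pos (mul_pos (mul_pos (mul_pos ?_ ?_) ?_) ?_) ?_) <;> omega
    apply mul_left_cancel₀ hP
    unfold ff
    push_cast
    rw [pow_succ]
    linear_combination
      ((-1:ℤ)^j * icho ((m:ℤ)+k-1+j) ((k:ℤ)-1) * icho (2*(m:ℤ)+k) ((m:ℤ)-j)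
        * ((m:ℤ)+a+1)^2*((m:ℤ)+k-a-1) * (((m:ℤ)+j+1)*((m:ℤ)+k+j+1)*((j:ℤ)+1-a))) * p1
      + ((-1:ℤ)^j * (2*(a:ℤ)+1)*((j:ℤ)+1+((m:ℤ)+k))*((j:ℤ)+1-a)*((m:ℤ)+a+1)) * p2

lemma keyD (m k : ℕ) (hk : 2 ≤ k) :
    ∀ t a : ℕ, a + t = m + 1 →
    ∑ j ∈ Finset.range (m+1), ff m k a a j
      = (-1)^m * icho ((m:ℤ)+k+a-1) ((k:ℤ)-1) * icho ((m:ℤ)+k-1-a) ((k:ℤ)-1) := by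
  intro t
  induction t with
  | zero =>
    intro a hA
    have ha : a = m + 1 := by omega
    subst ha
    rw [Finset.sum_eq_zero (fun j hj => ff_eq_zero_top (m+1) le_rfl
      (Nat.lt_succ_iff.mp (Finset.mem_range.mp hj)))]
    rw [show (m:ℤ)+k-1-((m+1:ℕ):ℤ) = (k:ℤ)-2 by push_cast; ring,
      icho_gt_s14 (A := (k:ℤ)-2) (B := (k:ℤ)-1) (by omega) (by omega)]
    ring
  | succ t ih =>
    intro a hA
    by_cases ham : a = m
    · subst ham
      rw [Finset.sum_eq_single_of_mem a (Finset.self_mem_range_succ a)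
        (fun j hj hne => ff_eq_zero_of_lt (by
          have := Finset.mem_range.mp hj; omega))]
      unfold ff
      rw [show (a:ℤ)-(a:ℤ) = 0 by ring,
        icho_zero (A := 2*(a:ℤ)+k) (by positivity),
        icho_zero (A := (a:ℤ)+a) (by positivity),
        icho_self (A := (a:ℤ)+a) (by positivity),
        show (a:ℤ)+k-1+a = (a:ℤ)+k+a-1 by ring,
        show (a:ℤ)+k-1-(a:ℤ) = (k:ℤ)-1 by ring, icho_self (by omega)]
      ring
    · have ham' : a < m := by omega
      have ih' := ih (a+1) (by omega)
      set g : ℕ → ℤ := fun j => ((j:ℤ)+((m:ℤ)+k))*((j:ℤ)-a) * ff m k a a j with hg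
      have tele : ∑ j ∈ Finset.range (m+1),
          (((m:ℤ)+a+1)^2*((m:ℤ)+k-a-1) * ff m k (a+1) (a+1) j
            - ((m:ℤ)+a+1)*((m:ℤ)+k+a)*((m:ℤ)-a) * ff m k a a j) = 0 := by
        have step : ∀ j ∈ Finset.range (m+1),
            ((m:ℤ)+a+1)^2*((m:ℤ)+k-a-1) * ff m k (a+1) (a+1) j
              - ((m:ℤ)+a+1)*((m:ℤ)+k+a)*((m:ℤ)-a) * ff m k a a j
            = (2*(a:ℤ)+1) * (g (j+1) - g j) := by
          intro j hj
          have hI := I1 m k a j (by omega) ham' (Nat.lt_succ_iff.mp (Finset.mem_range.mp hj))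
          simp only [hg]
          push_cast
          linear_combination hI
        rw [Finset.sum_congr rfl step, ← Finset.mul_sum,
          Finset.sum_range_sub (fun j => g j)]
        have hgtop : g (m+1) = 0 := by simp [hg, ff_eq_zero_succ]
        have hg0 : g 0 = 0 := by
          by_cases a0 : a = 0
          · subst a0; simp [hg]
          · simp [hg, ff_eq_zero_of_lt (show 0 < a by omega)]
        rw [hgtop, hg0]
        ring
      have hsum : ((m:ℤ)+a+1)*((m:ℤ)+k+a)*((m:ℤ)-a) * ∑ j ∈ Finset.range (m+1), ff m k a a j
          = ((m:ℤ)+a+1)^2*((m:ℤ)+k-a-1) * ∑ j ∈ Finset.range (m+1), ff m k (a+1) (a+1) j := by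
        rw [Finset.sum_sub_distrib, ← Finset.mul_sum, ← Finset.mul_sum] at tele
        linarith
      have hc : ((m:ℤ)+a+1)*((m:ℤ)+k+a)*((m:ℤ)-a) ≠ 0 := by
        refine ne_of_gt (mul_pos (mul_pos ?_ ?_) ?_) <;> omega
      apply mul_left_cancel₀ hc
      rw [hsum, ih']
      rw [show ((m:ℤ)+k+((a+1:ℕ):ℤ)-1) = (m:ℤ)+k+a by push_cast; ring,
        show ((m:ℤ)+k-1-((a+1:ℕ):ℤ)) = (m:ℤ)+k-a-2 by push_cast; ring]
      have u1 := ichoU ((m:ℤ)+k+a-1) ((k:ℤ)-1) (by omega) (by omega)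
      rw [show (m:ℤ)+k+a-1+1 = (m:ℤ)+k+a by ring] at u1
      have u2 := ichoU ((m:ℤ)+k-a-2) ((k:ℤ)-1) (by omega) (by omega)
      rw [show (m:ℤ)+k-a-2+1 = (m:ℤ)+k-1-a by ring] at u2
      linear_combination ((-1:ℤ)^m * ((m:ℤ)+a+1) * ((m:ℤ)+k-a-1) * icho ((m:ℤ)+k-a-2) ((k:ℤ)-1)) * u1
        - ((-1:ℤ)^m * ((m:ℤ)+a+1) * ((m:ℤ)+k+a) * icho ((m:ℤ)+k+a-1) ((k:ℤ)-1)) * u2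

lemma key_s14 (d : ℕ) : ∀ (m k a b : ℕ), 2 ≤ k → b + d = a → a ≤ m + 1 →
    ∑ j ∈ Finset.range (m+1), ff m k a b j
      = (-1)^(m+a+b) * icho ((m:ℤ)+k+b-1) ((k:ℤ)-1) * icho ((m:ℤ)+k-1-a) ((k:ℤ)-1) := by
  induction d with
  | zero =>
    intro m k a b hk hba ham
    obtain rfl : a = b := by omega
    rw [keyD m k hk (m+1-a) a (by omega)]
    rw [show m+a+a = m+2*a by ring, pow_add, pow_mul]
    norm_num
  | succ d ih =>
    intro m k a b hk hba ham
    have ha1 : 1 ≤ a := by omega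
    have e1 := ih m k (a-1) b hk (by omega) (by omega)
    have e2 := ih m k a (b+1) hk (by omega) ham
    have hrel : ((a:ℤ)+b) * ∑ j ∈ Finset.range (m+1), ff m k a b j
        = ((m:ℤ)-a+1) * ∑ j ∈ Finset.range (m+1), ff m k (a-1) b j
          - ((m:ℤ)+b+1) * ∑ j ∈ Finset.range (m+1), ff m k a (b+1) j := by
      rw [Finset.mul_sum, Finset.mul_sum, Finset.mul_sum, ← Finset.sum_sub_distrib]
      apply Finset.sum_congr rfl
      intro j hj
      have h1 := I2a m k a b j ha1
      have h2 := I2b m k a b j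
      linear_combination h2 - h1
    rw [e1, e2] at hrel
    have hc : ((a:ℤ)+b) ≠ 0 := by omega
    apply mul_left_cancel₀ hc
    rw [hrel]
    rw [show ((m:ℤ)+k-1-((a-1:ℕ):ℤ)) = (m:ℤ)+k-a by omega,
      show ((m:ℤ)+k+((b+1:ℕ):ℤ)-1) = (m:ℤ)+k+b by push_cast; ring]
    rw [show (-1:ℤ)^(m+(a-1)+b) = -((-1:ℤ)^(m+a+b)) by
        rw [show m+a+b = (m+(a-1)+b)+1 by omega, pow_succ]; ring,
      show (-1:ℤ)^(m+a+(b+1)) = -((-1:ℤ)^(m+a+b)) by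
        rw [show m+a+(b+1) = (m+a+b)+1 by omega, pow_succ]; ring]
    have u1 := ichoU ((m:ℤ)+k-1-a) ((k:ℤ)-1) (by omega) (by omega)
    rw [show (m:ℤ)+k-1-a+1 = (m:ℤ)+k-a by ring] at u1
    have u2 := ichoU ((m:ℤ)+k+b-1) ((k:ℤ)-1) (by omega) (by omega)
    rw [show (m:ℤ)+k+b-1+1 = (m:ℤ)+k+b by ring] at u2
    linear_combination ((-1:ℤ)^(m+a+b) * icho ((m:ℤ)+k-1-a) ((k:ℤ)-1)) * u2
      - ((-1:ℤ)^(m+a+b) * icho ((m:ℤ)+k+b-1) ((k:ℤ)-1)) * u1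

theorem dequalb (n k h i : ℕ) (hih : i ≤ h) (hh : h ≤ n - k) (hk2 : 2 ≤ k)
    (hkn : k ≤ n) :
    ∑ j ∈ Finset.Icc i (n - k), (-1 : ℤ) ^ j *
        ((n - 1 + j).choose (n - k + j)) * ((2 * n - k).choose (n - k - j)) *
        (((n - k + j).choose (j + h) * (n - k + j).choose (j - i) : ℤ) -
          ((n - k + j).choose (j + h + 1) : ℤ) *
            icho ((n : ℤ) - k + j) ((j : ℤ) - i - 1)) =
      (-1) ^ (n + k + h + i) *
        (((n + i - 1).choose (k - 1) * (n - h - 1).choose (k - 1) : ℤ) -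
          ((n + i).choose (k - 1) * (n - h - 2).choose (k - 1) : ℤ)) := by
  set m := n - k with hmdef
  have hsplit : ∀ j ∈ Finset.Icc i m,
      (-1 : ℤ) ^ j * ((n - 1 + j).choose (m + j)) * ((2 * n - k).choose (m - j)) *
        (((m + j).choose (j + h) * (m + j).choose (j - i) : ℤ) -
          ((m + j).choose (j + h + 1) : ℤ) * icho ((n : ℤ) - k + j) ((j : ℤ) - i - 1))
      = ff m k h i j - ff m k (h + 1) (i + 1) j := by
    intro j hj
    obtain ⟨hji, hjm⟩ := Finset.mem_Icc.mp hj
    unfold ff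
    rw [show ((n - 1 + j).choose (m + j)) = ((m+k-1+j).choose (k-1)) by
        rw [← Nat.choose_symm (show m+j ≤ n-1+j by omega)]; congr 1 <;> omega]
    rw [show ((2*n-k).choose (m-j)) = ((2*m+k).choose (m-j)) by congr 1; omega]
    rw [show ((m:ℤ)+k-1+j) = ((m+k-1+j : ℕ) : ℤ) by omega,
      show ((k:ℤ)-1) = ((k-1 : ℕ) : ℤ) by omega,
      show (2*(m:ℤ)+k) = ((2*m+k : ℕ) : ℤ) by omega,
      show ((m:ℤ)-j) = ((m-j : ℕ) : ℤ) by omega,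
      show ((m:ℤ)+j) = ((m+j : ℕ) : ℤ) by omega,
      show ((j:ℤ)+(h:ℤ)) = ((j+h : ℕ) : ℤ) by omega,
      show ((j:ℤ)-(i:ℤ)) = ((j-i : ℕ) : ℤ) by omega,
      show ((j:ℤ)+((h+1 : ℕ):ℤ)) = ((j+h+1 : ℕ) : ℤ) by omega,
      icho_coe, icho_coe, icho_coe, icho_coe, icho_coe,
      show ((n:ℤ)-k+j) = (((m+j : ℕ)) : ℤ) by omega,
      show ((((j-i : ℕ)):ℤ) - 1) = ((j:ℤ)-((i+1 : ℕ):ℤ)) by omega]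
    ring
  rw [Finset.sum_congr rfl hsplit]
  have hsub : Finset.Icc i m ⊆ Finset.range (m+1) := by
    intro x hx
    rw [Finset.mem_range]
    have := Finset.mem_Icc.mp hx
    omega
  rw [Finset.sum_subset hsub (fun x hx hnx => by
      have hxi : x < i := by
        rw [Finset.mem_range] at hx
        by_contra hc
        exact hnx (Finset.mem_Icc.mpr ⟨by omega, by omega⟩)
      rw [ff_eq_zero_of_lt hxi, ff_eq_zero_of_lt (show x < i+1 by omega)]; ring)]
  rw [Finset.sum_sub_distrib, key_s14 (h-i) m k h i hk2 (by omega) (by omega),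
    key_s14 (h-i) m k (h+1) (i+1) hk2 (by omega) (by omega)]
  rw [show icho ((m:ℤ)+k+(i:ℤ)-1) ((k:ℤ)-1) = ((n+i-1).choose (k-1) : ℤ) by
      rw [show ((m:ℤ)+k+(i:ℤ)-1) = ((n+i-1 : ℕ) : ℤ) by omega,
        show ((k:ℤ)-1) = ((k-1 : ℕ) : ℤ) by omega, icho_coe],
    show icho ((m:ℤ)+k-1-(h:ℤ)) ((k:ℤ)-1) = ((n-h-1).choose (k-1) : ℤ) by
      rw [show ((m:ℤ)+k-1-(h:ℤ)) = ((n-h-1 : ℕ) : ℤ) by omega,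
        show ((k:ℤ)-1) = ((k-1 : ℕ) : ℤ) by omega, icho_coe],
    show icho ((m:ℤ)+k+((i+1:ℕ):ℤ)-1) ((k:ℤ)-1) = ((n+i).choose (k-1) : ℤ) by
      rw [show ((m:ℤ)+k+((i+1:ℕ):ℤ)-1) = ((n+i : ℕ) : ℤ) by omega,
        show ((k:ℤ)-1) = ((k-1 : ℕ) : ℤ) by omega, icho_coe],
    show icho ((m:ℤ)+k-1-((h+1:ℕ):ℤ)) ((k:ℤ)-1) = ((n-h-2).choose (k-1) : ℤ) by
      rw [show ((m:ℤ)+k-1-((h+1:ℕ):ℤ)) = ((n-h-2 : ℕ) : ℤ) by omega,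
        show ((k:ℤ)-1) = ((k-1 : ℕ) : ℤ) by omega, icho_coe]]
  rw [show (-1:ℤ)^(m+(h+1)+(i+1)) = (-1:ℤ)^(m+h+i) by
      rw [show m+(h+1)+(i+1) = (m+h+i)+2 by ring, pow_add]; norm_num,
    show (-1:ℤ)^(m+h+i) = (-1:ℤ)^(n+k+h+i) by
      rw [show n+k+h+i = (m+h+i)+2*k by omega, pow_add ((-1):ℤ) (m+h+i) (2*k),
        pow_mul]; norm_num]
  ring
end

section
/- For nonnegative integers n, k, h, i with 0 ≤ i < h ≤ n-k and k ≥ 2, the quantities D^{n,k}_{h,i} defined by D^{n,k}_{h,i} = Σ_{j=i}^{n-k} (-1)^j · C(n-1+j, n-k+j) · C(2n-k, n-k-j) · (C(n-k+j, j+h)·C(n-k+j, j-i) − C(n-k+j, j+h+1)·C(n-k+j, j-i-1)) satisfy the two-term recurrence (n+i)·(i+h+2)·D^{n,k}_{h,i} = −(h+i+1)·(n-k+i+2)·D^{n,k}_{h,i+1}. -/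
open Polynomial Finset

lemma taylor_one_ne (P : Polynomial ℤ) (hP : P ≠ 0) : Polynomial.taylor 1 P ≠ 0 := by
  intro h
  apply hP
  have h2 : Polynomial.taylor (-1) (Polynomial.taylor 1 P) = Polynomial.taylor (-1) 0 :=
    congrArg _ h
  rw [taylor_taylor] at h2
  simpa using h2

lemma taylor_one_degree (P : Polynomial ℤ) (hP : P ≠ 0) :
    (Polynomial.taylor 1 P).degree = P.degree := by
  rw [Polynomial.degree_eq_natDegree (taylor_one_ne P hP), Polynomial.degree_eq_natDegree hP,
    natDegree_taylor]

lemma alt_sum_poly (M : ℕ) (P : Polynomial ℤ) (hP : P.degree < (M : ℕ)) :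
    ∑ l ∈ range (M + 1), (-1 : ℤ) ^ l * (M.choose l : ℤ) * P.eval (l : ℤ) = 0 := by
  induction M generalizing P with
  | zero =>
    have hb : P.degree = ⊥ := Nat.WithBot.lt_zero_iff.mp (by exact_mod_cast hP)
    have hP0 : P = 0 := Polynomial.degree_eq_bot.mp hb
    simp [hP0]
  | succ M ih =>
    by_cases hP0 : P = 0
    · simp [hP0]
    set Q : Polynomial ℤ := Polynomial.taylor 1 P - P with hQ
    have hQdeg : Q.degree < (M : ℕ) := by
      rcases lt_or_ge P.natDegree M with h | h
      · have hd : P.degree < (M : ℕ) := (Polynomial.natDegree_lt_iff_degree_lt hP0).mp h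
        calc Q.degree ≤ max (Polynomial.taylor 1 P).degree P.degree := degree_sub_le _ _
          _ < (M : ℕ) := by rw [taylor_one_degree P hP0]; simpa using hd
      · have hnd : P.natDegree < M + 1 := (Polynomial.natDegree_lt_iff_degree_lt hP0).mpr hP
        have hndM : P.natDegree = M := le_antisymm (Nat.lt_succ_iff.mp hnd) h
        have hdeg : P.degree = (M : ℕ) := by
          rw [Polynomial.degree_eq_natDegree hP0, hndM]
        have hlc : (Polynomial.taylor 1 P).leadingCoeff = P.leadingCoeff := by
          rw [taylor_apply, Polynomial.leadingCoeff_comp (by simp only [natDegree_X_add_C]; exact one_ne_zero)]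
          have h1 : (X + C (1:ℤ)).leadingCoeff = 1 := monic_X_add_C 1
          rw [h1, one_pow, mul_one]
        have hlt := Polynomial.degree_sub_lt (taylor_one_degree P hP0) (taylor_one_ne P hP0) hlc
        rw [taylor_one_degree P hP0, hdeg] at hlt
        exact hlt
    have hQev : ∀ x : ℤ, Q.eval x = P.eval (x + 1) - P.eval x := by
      intro x
      simp [hQ, taylor_apply, Polynomial.eval_comp]
    have hB := ih Q hQdeg
    have key : ∀ l : ℕ, (((M+1).choose (l+1) : ℕ) : ℤ) = (M.choose l : ℤ) + (M.choose (l+1) : ℤ) := by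
      intro l; exact_mod_cast congrArg (Nat.cast : ℕ → ℤ) (Nat.choose_succ_succ M l)
    have e2 : ∑ l ∈ range (M + 2), (-1 : ℤ) ^ l * (M.choose l : ℤ) * P.eval (l : ℤ)
        = (∑ l ∈ range (M + 1), (-1 : ℤ) ^ (l+1) * (M.choose (l+1) : ℤ) * P.eval ((l : ℤ) + 1)) + P.eval 0 := by
      rw [Finset.sum_range_succ']
      push_cast
      ring_nf
      simp
    have e3 : ∑ l ∈ range (M + 2), (-1 : ℤ) ^ l * (M.choose l : ℤ) * P.eval (l : ℤ)
        = ∑ l ∈ range (M + 1), (-1 : ℤ) ^ l * (M.choose l : ℤ) * P.eval (l : ℤ) := by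
      rw [Finset.sum_range_succ, Nat.choose_succ_self]
      simp
    calc ∑ l ∈ range (M + 1 + 1), (-1 : ℤ) ^ l * ((M+1).choose l : ℤ) * P.eval (l : ℤ)
        = (∑ l ∈ range (M + 1), (-1 : ℤ) ^ (l+1) * ((M+1).choose (l+1) : ℤ) * P.eval ((l : ℤ) + 1)) + P.eval 0 := by
          rw [Finset.sum_range_succ']
          push_cast
          ring_nf
          simp
      _ = (∑ l ∈ range (M + 1), ((-1 : ℤ) ^ (l+1) * (M.choose l : ℤ) * P.eval ((l : ℤ) + 1)
            + (-1 : ℤ) ^ (l+1) * (M.choose (l+1) : ℤ) * P.eval ((l : ℤ) + 1))) + P.eval 0 := by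
          congr 1
          refine Finset.sum_congr rfl fun l _ => ?_
          rw [key l]; ring
      _ = (∑ l ∈ range (M + 1), (-1 : ℤ) ^ (l+1) * (M.choose l : ℤ) * P.eval ((l : ℤ) + 1))
            + ((∑ l ∈ range (M + 1), (-1 : ℤ) ^ (l+1) * (M.choose (l+1) : ℤ) * P.eval ((l : ℤ) + 1)) + P.eval 0) := by
          rw [Finset.sum_add_distrib]; ring
      _ = (∑ l ∈ range (M + 1), (-1 : ℤ) ^ (l+1) * (M.choose l : ℤ) * P.eval ((l : ℤ) + 1))
            + ∑ l ∈ range (M + 1), (-1 : ℤ) ^ l * (M.choose l : ℤ) * P.eval (l : ℤ) := by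
          rw [← e2, e3]
      _ = -∑ l ∈ range (M + 1), (-1 : ℤ) ^ l * (M.choose l : ℤ) * Q.eval (l : ℤ) := by
          rw [← Finset.sum_neg_distrib, ← Finset.sum_add_distrib]
          refine Finset.sum_congr rfl fun l _ => ?_
          rw [hQev]
          ring
      _ = 0 := by rw [hB, neg_zero]

open Polynomial Finset

lemma prod_eval_desc (a b x : ℕ) (hx : x + b ≤ a + 1) :
    ∏ t ∈ range b, ((a : ℤ) - (t : ℤ) - (x : ℤ)) = ((a - x).descFactorial b : ℤ) := by
  rw [Nat.descFactorial_eq_prod_range, Nat.cast_prod]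
  refine Finset.prod_congr rfl fun t ht => ?_
  rw [Finset.mem_range] at ht
  push_cast [Nat.cast_sub (by omega : t ≤ a - x), Nat.cast_sub (by omega : x ≤ a)]
  ring

lemma prod_eval_zero (a b x : ℕ) (h1 : x ≤ a) (h2 : a < x + b) :
    ∏ t ∈ range b, ((a : ℤ) - (t : ℤ) - (x : ℤ)) = 0 := by
  apply Finset.prod_eq_zero (i := a - x) (Finset.mem_range.mpr (by omega))
  push_cast [Nat.cast_sub h1]
  ring

lemma deg_prod_linfac (b : ℕ) (f : ℕ → ℤ) :
    (∏ t ∈ range b, (C (f t) - X) : Polynomial ℤ).degree = (b : WithBot ℕ) := by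
  rw [Polynomial.degree_prod]
  have h1 : ∀ t : ℕ, (C (f t) - X : Polynomial ℤ).degree = 1 := by
    intro t
    have : (C (f t) - X : Polynomial ℤ) = -(X - C (f t)) := by ring
    rw [this, Polynomial.degree_neg, Polynomial.degree_X_sub_C]
  rw [Finset.sum_congr rfl fun t _ => h1 t, Finset.sum_const, Finset.card_range]
  induction b with
  | zero => simp
  | succ m ih => rw [succ_nsmul, ih]; exact (Nat.cast_add_one m).symm


lemma Tzero (N K h i : ℕ) (hih : i < h) (hh : h ≤ N) :
    ∑ j ∈ Icc i N, (-1 : ℤ) ^ j * ((N + K + 1 + j : ℕ) : ℤ) * (((N + K + j).choose K : ℕ) : ℤ) *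
      (((2 * N + K + 1).choose (N - j) : ℕ) : ℤ) * (((N + j).choose (j + h) : ℕ) : ℤ) *
      (((N + j).choose (j - i) : ℕ) : ℤ) = 0 := by
  classical
  set M : ℕ := 2 * N + K + 1 with hM
  set P : Polynomial ℤ :=
      (C (M : ℤ) - X) * (∏ t ∈ range K, (C (((2 * N + K : ℕ) : ℤ) - (t : ℤ)) - X)) *
      ((∏ t ∈ range (N - h), (C (((2 * N : ℕ) : ℤ) - (t : ℤ)) - X)) *
       (∏ t ∈ range (N + i), (C (((2 * N : ℕ) : ℤ) - (t : ℤ)) - X))) with hP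
  have hPeval : ∀ x : ℤ, P.eval x =
      ((M : ℤ) - x) * (∏ t ∈ range K, (((2 * N + K : ℕ) : ℤ) - (t : ℤ) - x)) *
      ((∏ t ∈ range (N - h), (((2 * N : ℕ) : ℤ) - (t : ℤ) - x)) *
       (∏ t ∈ range (N + i), (((2 * N : ℕ) : ℤ) - (t : ℤ) - x))) := by
    intro x
    simp [hP, Polynomial.eval_prod]
  have hdeg : P.degree < (M : ℕ) := by
    have d1 : (C (M : ℤ) - X : Polynomial ℤ).degree = 1 := by
      have : (C (M : ℤ) - X : Polynomial ℤ) = -(X - C (M : ℤ)) := by ring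
      rw [this, Polynomial.degree_neg, Polynomial.degree_X_sub_C]
    rw [hP, Polynomial.degree_mul, Polynomial.degree_mul, Polynomial.degree_mul, d1,
      deg_prod_linfac, deg_prod_linfac, deg_prod_linfac]
    have : ((1 : WithBot ℕ) + K + (((N - h : ℕ) : WithBot ℕ) + ((N + i : ℕ) : WithBot ℕ)))
        = ((1 + K + ((N - h) + (N + i)) : ℕ) : WithBot ℕ) := by
      push_cast
      rfl
    rw [this, Nat.cast_lt]
    omega
  have halt := alt_sum_poly M P hdeg
  have hsub : ∑ l ∈ range (N - i + 1), (-1 : ℤ) ^ l * (M.choose l : ℤ) * P.eval (l : ℤ) = 0 := by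
    rw [← halt]
    apply Finset.sum_subset (Finset.range_subset_range.mpr (by omega))
    intro l hl hnl
    rw [Finset.mem_range] at hl hnl
    push_neg at hnl
    have hl' : N - i + 1 ≤ l := hnl
    have hzero : P.eval (l : ℤ) = 0 := by
      rw [hPeval]
      by_cases hc1 : l = M
      · subst hc1; simp
      · by_cases hc2 : 2 * N < l
        · have : (∏ t ∈ range K, (((2 * N + K : ℕ) : ℤ) - (t : ℤ) - (l : ℤ))) = 0 :=
            prod_eval_zero (2 * N + K) K l (by omega) (by omega)
          rw [this]; ring
        · have : (∏ t ∈ range (N + i), (((2 * N : ℕ) : ℤ) - (t : ℤ) - (l : ℤ))) = 0 :=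
            prod_eval_zero (2 * N) (N + i) l (by omega) (by omega)
          rw [this]; ring
    rw [hzero]; ring
  have hre : ∑ j ∈ Icc i N, (-1 : ℤ) ^ (N - j) * (M.choose (N - j) : ℤ) * P.eval ((N - j : ℕ) : ℤ) = 0 := by
    rw [← hsub]
    apply Finset.sum_nbij' (i := fun j => N - j) (j := fun l => N - l)
    · intro a ha; rw [Finset.mem_Icc] at ha; rw [Finset.mem_range]; omega
    · intro a ha; rw [Finset.mem_range] at ha; rw [Finset.mem_Icc]; omega
    · intro a ha; rw [Finset.mem_Icc] at ha; omega
    · intro a ha; rw [Finset.mem_range] at ha; omega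
    · intro a ha; rfl
  -- pointwise evaluation on Icc i N
  have hpt : ∀ j ∈ Icc i N,
      (-1 : ℤ) ^ (N - j) * (M.choose (N - j) : ℤ) * P.eval ((N - j : ℕ) : ℤ)
      = ((-1 : ℤ) ^ N * ((K.factorial : ℤ) * (((N - h).factorial : ℤ) * ((N + i).factorial : ℤ)))) *
        ((-1 : ℤ) ^ j * ((N + K + 1 + j : ℕ) : ℤ) * (((N + K + j).choose K : ℕ) : ℤ) *
         (((2 * N + K + 1).choose (N - j) : ℕ) : ℤ) * (((N + j).choose (j + h) : ℕ) : ℤ) *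
         (((N + j).choose (j - i) : ℕ) : ℤ)) := by
    intro j hj
    rw [Finset.mem_Icc] at hj
    obtain ⟨hji, hjN⟩ := hj
    have hsign : (-1 : ℤ) ^ (N - j) = (-1 : ℤ) ^ N * (-1 : ℤ) ^ j := by
      have e : N + j = (N - j) + 2 * j := by omega
      have : (-1 : ℤ) ^ (N + j) = (-1 : ℤ) ^ (N - j) := by
        rw [e, pow_add, pow_mul]
        norm_num
      rw [← this, pow_add]
    have e0 : ((M : ℤ) - ((N - j : ℕ) : ℤ)) = ((N + K + 1 + j : ℕ) : ℤ) := by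
      push_cast [Nat.cast_sub hjN]
      rw [hM]; push_cast
      ring
    have e1 : (∏ t ∈ range K, (((2 * N + K : ℕ) : ℤ) - (t : ℤ) - ((N - j : ℕ) : ℤ)))
        = (K.factorial : ℤ) * (((N + K + j).choose K : ℕ) : ℤ) := by
      rw [prod_eval_desc (2 * N + K) K (N - j) (by omega)]
      have : 2 * N + K - (N - j) = N + K + j := by omega
      rw [this, Nat.descFactorial_eq_factorial_mul_choose]
      push_cast
      ring
    have e2 : (∏ t ∈ range (N - h), (((2 * N : ℕ) : ℤ) - (t : ℤ) - ((N - j : ℕ) : ℤ)))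
        = ((N - h).factorial : ℤ) * (((N + j).choose (j + h) : ℕ) : ℤ) := by
      rw [prod_eval_desc (2 * N) (N - h) (N - j) (by omega)]
      have h1 : 2 * N - (N - j) = N + j := by omega
      rw [h1, Nat.descFactorial_eq_factorial_mul_choose]
      have h2 : (N + j).choose (N - h) = (N + j).choose (j + h) := by
        have h3 : N - h = (N + j) - (j + h) := by omega
        rw [h3, Nat.choose_symm (by omega)]
      rw [h2]
      push_cast
      ring
    have e3 : (∏ t ∈ range (N + i), (((2 * N : ℕ) : ℤ) - (t : ℤ) - ((N - j : ℕ) : ℤ)))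
        = ((N + i).factorial : ℤ) * (((N + j).choose (j - i) : ℕ) : ℤ) := by
      rw [prod_eval_desc (2 * N) (N + i) (N - j) (by omega)]
      have h1 : 2 * N - (N - j) = N + j := by omega
      rw [h1, Nat.descFactorial_eq_factorial_mul_choose]
      have h2 : (N + j).choose (N + i) = (N + j).choose (j - i) := by
        have h3 : N + i = (N + j) - (j - i) := by omega
        rw [h3, Nat.choose_symm (by omega)]
      rw [h2]
      push_cast
      ring
    rw [hPeval, e0, e1, e2, e3, hsign]
    ring
  have hfinal : ((-1 : ℤ) ^ N * ((K.factorial : ℤ) * (((N - h).factorial : ℤ) * ((N + i).factorial : ℤ)))) *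
      (∑ j ∈ Icc i N, (-1 : ℤ) ^ j * ((N + K + 1 + j : ℕ) : ℤ) * (((N + K + j).choose K : ℕ) : ℤ) *
        (((2 * N + K + 1).choose (N - j) : ℕ) : ℤ) * (((N + j).choose (j + h) : ℕ) : ℤ) *
        (((N + j).choose (j - i) : ℕ) : ℤ)) = 0 := by
    rw [Finset.mul_sum, ← Finset.sum_congr rfl hpt]
    exact hre
  have hne : ((-1 : ℤ) ^ N * ((K.factorial : ℤ) * (((N - h).factorial : ℤ) * ((N + i).factorial : ℤ)))) ≠ 0 := by
    positivity
  exact (mul_eq_zero.mp hfinal).resolve_left hne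



/-- The quantities `D^{n,k}_{h,i}` from the paper. -/
def D (n k h i : ℕ) : ℤ :=
  ∑ j ∈ Finset.Icc i (n - k), (-1 : ℤ) ^ j *
    ((n - 1 + j).choose (n - k + j)) * ((2 * n - k).choose (n - k - j)) *
    (((n - k + j).choose (j + h) * (n - k + j).choose (j - i) : ℤ) -
      ((n - k + j).choose (j + h + 1) : ℤ) * icho ((n : ℤ) - k + j) ((j : ℤ) - i - 1))


def SS (N K h i : ℕ) : ℤ :=
  ∑ j ∈ Finset.Icc i N, (-1 : ℤ) ^ j * (((N + K + j).choose K : ℕ) : ℤ) *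
    (((2 * N + K + 1).choose (N - j) : ℕ) : ℤ) * (((N + j).choose (j + h) : ℕ) : ℤ) *
    (((N + j).choose (j - i) : ℕ) : ℤ)

lemma SStop (N K h i : ℕ) (hh : N < h) : SS N K h i = 0 := by
  unfold SS
  apply Finset.sum_eq_zero
  intro j hj
  have : (N + j).choose (j + h) = 0 := Nat.choose_eq_zero_of_lt (by omega)
  rw [this]
  push_cast
  ring

lemma Ri (N K h i : ℕ) (hih : i < h) (hh : h ≤ N) :
    ((N + K + 1 + i : ℕ) : ℤ) * SS N K h i + ((N + i + 1 : ℕ) : ℤ) * SS N K h (i + 1) = 0 := by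
  have key : ∀ j : ℕ, i + 1 ≤ j →
      ((N + i + 1 : ℕ) : ℤ) * (((N + j).choose (j - (i + 1)) : ℕ) : ℤ)
        = ((j - i : ℕ) : ℤ) * (((N + j).choose (j - i) : ℕ) : ℤ) := by
    intro j hj
    have hc := Nat.choose_succ_right_eq (N + j) (j - i - 1)
    have h1 : j - i - 1 + 1 = j - i := by omega
    have h2 : N + j - (j - i - 1) = N + i + 1 := by omega
    rw [h1, h2] at hc
    have h3 : j - (i + 1) = j - i - 1 := by omega
    have hcz : (((N + j).choose (j - i) : ℕ) : ℤ) * ((j - i : ℕ) : ℤ)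
        = (((N + j).choose (j - i - 1) : ℕ) : ℤ) * ((N + i + 1 : ℕ) : ℤ) := by exact_mod_cast hc
    rw [h3]
    linear_combination -hcz
  have e1 : ((N + i + 1 : ℕ) : ℤ) * SS N K h (i + 1)
      = ∑ j ∈ Finset.Icc i N, ((j - i : ℕ) : ℤ) * ((-1 : ℤ) ^ j * (((N + K + j).choose K : ℕ) : ℤ) *
        (((2 * N + K + 1).choose (N - j) : ℕ) : ℤ) * (((N + j).choose (j + h) : ℕ) : ℤ) *
        (((N + j).choose (j - i) : ℕ) : ℤ)) := by
    unfold SS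
    rw [Finset.mul_sum]
    have hiN : i ≤ N := le_trans (le_of_lt hih) hh
    rw [← Finset.Ioc_insert_left hiN, Finset.sum_insert (by simp)]
    have hz : ((i - i : ℕ) : ℤ) = 0 := by simp
    rw [← Finset.Icc_add_one_left_eq_Ioc]
    have : ((i - i : ℕ) : ℤ) * ((-1 : ℤ) ^ i * (((N + K + i).choose K : ℕ) : ℤ) *
        (((2 * N + K + 1).choose (N - i) : ℕ) : ℤ) * (((N + i).choose (i + h) : ℕ) : ℤ) *
        (((N + i).choose (i - i) : ℕ) : ℤ)) = 0 := by rw [hz]; ring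
    rw [this, zero_add]
    refine Finset.sum_congr rfl fun j hj => ?_
    rw [Finset.mem_Icc] at hj
    have := key j hj.1
    calc ((N + i + 1 : ℕ) : ℤ) * ((-1 : ℤ) ^ j * (((N + K + j).choose K : ℕ) : ℤ) *
        (((2 * N + K + 1).choose (N - j) : ℕ) : ℤ) * (((N + j).choose (j + h) : ℕ) : ℤ) *
        (((N + j).choose (j - (i + 1)) : ℕ) : ℤ))
        = (((N + i + 1 : ℕ) : ℤ) * (((N + j).choose (j - (i + 1)) : ℕ) : ℤ)) * ((-1 : ℤ) ^ j *
          (((N + K + j).choose K : ℕ) : ℤ) * (((2 * N + K + 1).choose (N - j) : ℕ) : ℤ) *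
          (((N + j).choose (j + h) : ℕ) : ℤ)) := by ring
      _ = _ := by rw [this]; ring
  rw [e1]
  unfold SS
  rw [Finset.mul_sum, ← Finset.sum_add_distrib]
  have := Tzero N K h i hih hh
  rw [← this]
  refine Finset.sum_congr rfl fun j hj => ?_
  rw [Finset.mem_Icc] at hj
  have hcast : ((N + K + 1 + i : ℕ) : ℤ) + ((j - i : ℕ) : ℤ) = ((N + K + 1 + j : ℕ) : ℤ) := by
    push_cast [Nat.cast_sub hj.1]
    ring
  calc ((N + K + 1 + i : ℕ) : ℤ) * ((-1 : ℤ) ^ j * (((N + K + j).choose K : ℕ) : ℤ) *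
      (((2 * N + K + 1).choose (N - j) : ℕ) : ℤ) * (((N + j).choose (j + h) : ℕ) : ℤ) *
      (((N + j).choose (j - i) : ℕ) : ℤ))
      + ((j - i : ℕ) : ℤ) * ((-1 : ℤ) ^ j * (((N + K + j).choose K : ℕ) : ℤ) *
      (((2 * N + K + 1).choose (N - j) : ℕ) : ℤ) * (((N + j).choose (j + h) : ℕ) : ℤ) *
      (((N + j).choose (j - i) : ℕ) : ℤ))
      = (((N + K + 1 + i : ℕ) : ℤ) + ((j - i : ℕ) : ℤ)) * ((-1 : ℤ) ^ j *
        (((N + K + j).choose K : ℕ) : ℤ) * (((2 * N + K + 1).choose (N - j) : ℕ) : ℤ) *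
        (((N + j).choose (j + h) : ℕ) : ℤ) * (((N + j).choose (j - i) : ℕ) : ℤ)) := by ring
    _ = _ := by rw [hcast]; ring

lemma Rh (N K h i : ℕ) (hih : i ≤ h) (hh : h < N) :
    ((N - h : ℕ) : ℤ) * SS N K h i + ((N - h + K : ℕ) : ℤ) * SS N K (h + 1) i = 0 := by
  have key : ∀ j : ℕ, ((N - h : ℕ) : ℤ) * (((N + j).choose (j + h) : ℕ) : ℤ)
      = ((j + h + 1 : ℕ) : ℤ) * (((N + j).choose (j + (h + 1)) : ℕ) : ℤ) := by
    intro j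
    have hc := Nat.choose_succ_right_eq (N + j) (j + h)
    have h2 : N + j - (j + h) = N - h := by omega
    rw [h2] at hc
    have h3 : j + (h + 1) = j + h + 1 := by omega
    have hcz : (((N + j).choose (j + h + 1) : ℕ) : ℤ) * ((j + h + 1 : ℕ) : ℤ)
        = (((N + j).choose (j + h) : ℕ) : ℤ) * ((N - h : ℕ) : ℤ) := by exact_mod_cast hc
    rw [h3]
    linear_combination -hcz
  unfold SS
  rw [Finset.mul_sum, Finset.mul_sum, ← Finset.sum_add_distrib]
  have hT := Tzero N K (h + 1) i (by omega) (by omega)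
  rw [← hT]
  refine Finset.sum_congr rfl fun j hj => ?_
  rw [Finset.mem_Icc] at hj
  have hcast : ((j + h + 1 : ℕ) : ℤ) + ((N - h + K : ℕ) : ℤ) = ((N + K + 1 + j : ℕ) : ℤ) := by
    push_cast [Nat.cast_sub (le_of_lt hh)]
    ring
  calc ((N - h : ℕ) : ℤ) * ((-1 : ℤ) ^ j * (((N + K + j).choose K : ℕ) : ℤ) *
      (((2 * N + K + 1).choose (N - j) : ℕ) : ℤ) * (((N + j).choose (j + h) : ℕ) : ℤ) *
      (((N + j).choose (j - i) : ℕ) : ℤ))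
      + ((N - h + K : ℕ) : ℤ) * ((-1 : ℤ) ^ j * (((N + K + j).choose K : ℕ) : ℤ) *
      (((2 * N + K + 1).choose (N - j) : ℕ) : ℤ) * (((N + j).choose (j + (h + 1)) : ℕ) : ℤ) *
      (((N + j).choose (j - i) : ℕ) : ℤ))
      = (((N - h : ℕ) : ℤ) * (((N + j).choose (j + h) : ℕ) : ℤ)) * ((-1 : ℤ) ^ j *
        (((N + K + j).choose K : ℕ) : ℤ) * (((2 * N + K + 1).choose (N - j) : ℕ) : ℤ) *
        (((N + j).choose (j - i) : ℕ) : ℤ))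
      + ((N - h + K : ℕ) : ℤ) * ((-1 : ℤ) ^ j * (((N + K + j).choose K : ℕ) : ℤ) *
      (((2 * N + K + 1).choose (N - j) : ℕ) : ℤ) * (((N + j).choose (j + (h + 1)) : ℕ) : ℤ) *
      (((N + j).choose (j - i) : ℕ) : ℤ)) := by ring
    _ = _ := by
      rw [key j]
      calc ((j + h + 1 : ℕ) : ℤ) * (((N + j).choose (j + (h + 1)) : ℕ) : ℤ) * ((-1 : ℤ) ^ j *
          (((N + K + j).choose K : ℕ) : ℤ) * (((2 * N + K + 1).choose (N - j) : ℕ) : ℤ) *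
          (((N + j).choose (j - i) : ℕ) : ℤ))
          + ((N - h + K : ℕ) : ℤ) * ((-1 : ℤ) ^ j * (((N + K + j).choose K : ℕ) : ℤ) *
          (((2 * N + K + 1).choose (N - j) : ℕ) : ℤ) * (((N + j).choose (j + (h + 1)) : ℕ) : ℤ) *
          (((N + j).choose (j - i) : ℕ) : ℤ))
          = (((j + h + 1 : ℕ) : ℤ) + ((N - h + K : ℕ) : ℤ)) * ((-1 : ℤ) ^ j *
            (((N + K + j).choose K : ℕ) : ℤ) * (((2 * N + K + 1).choose (N - j) : ℕ) : ℤ) *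
            (((N + j).choose (j + (h + 1)) : ℕ) : ℤ) * (((N + j).choose (j - i) : ℕ) : ℤ)) := by ring
        _ = _ := by rw [hcast]; ring
lemma icho_neg_one (a : ℤ) (ha : 0 ≤ a) : icho a (-1) = 0 := by
  unfold icho
  rw [if_neg (by omega), if_neg (by omega)]

lemma icho_nat (a b : ℕ) (hba : b ≤ a) : icho (a : ℤ) (b : ℤ) = (a.choose b : ℤ) := by
  unfold icho
  rw [if_pos (by positivity), if_pos (by exact_mod_cast hba)]
  simp

lemma D_eq (n k h i : ℕ) (hk2 : 2 ≤ k) (hkn : k < n) (hiN : i ≤ n - k) :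
    D n k h i = SS (n - k) (k - 1) h i - SS (n - k) (k - 1) (h + 1) (i + 1) := by
  set N := n - k with hN
  set K := k - 1 with hK
  have hc1 : ∀ j : ℕ, (n - 1 + j).choose (n - k + j) = (N + K + j).choose K := by
    intro j
    have e1 : n - 1 + j = N + K + j := by omega
    have e2 : n - k + j = N + j := by omega
    rw [e1, e2]
    have e3 : N + j = (N + K + j) - K := by omega
    rw [e3, Nat.choose_symm (by omega)]
  have hc2 : ∀ j : ℕ, (2 * n - k).choose (n - k - j) = (2 * N + K + 1).choose (N - j) := by
    intro j
    have e : 2 * n - k = 2 * N + K + 1 := by omega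
    rw [e]
  have hc3 : ∀ j : ℕ, n - k + j = N + j := fun j => rfl
  have hnk : ((n : ℤ) - k) = ((N : ℕ) : ℤ) := by
    rw [Nat.cast_sub (le_of_lt hkn)]
  unfold D
  have hstep : ∀ j ∈ Finset.Icc i N,
      (-1 : ℤ) ^ j * ((n - 1 + j).choose (n - k + j) : ℤ) * ((2 * n - k).choose (n - k - j) : ℤ) *
        (((n - k + j).choose (j + h) * (n - k + j).choose (j - i) : ℤ) -
          ((n - k + j).choose (j + h + 1) : ℤ) * icho ((n : ℤ) - k + j) ((j : ℤ) - i - 1))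
      = ((-1 : ℤ) ^ j * (((N + K + j).choose K : ℕ) : ℤ) * (((2 * N + K + 1).choose (N - j) : ℕ) : ℤ) *
          (((N + j).choose (j + h) : ℕ) : ℤ) * (((N + j).choose (j - i) : ℕ) : ℤ))
        - ((-1 : ℤ) ^ j * (((N + K + j).choose K : ℕ) : ℤ) * (((2 * N + K + 1).choose (N - j) : ℕ) : ℤ) *
          (((N + j).choose (j + h + 1) : ℕ) : ℤ) * icho ((n : ℤ) - k + j) ((j : ℤ) - i - 1)) := by
    intro j _
    rw [hc1 j, hc2 j, hc3 j]
    ring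
  rw [Finset.sum_congr rfl hstep, Finset.sum_sub_distrib]
  have hfirst : (∑ j ∈ Finset.Icc i N, (-1 : ℤ) ^ j * (((N + K + j).choose K : ℕ) : ℤ) *
      (((2 * N + K + 1).choose (N - j) : ℕ) : ℤ) * (((N + j).choose (j + h) : ℕ) : ℤ) *
      (((N + j).choose (j - i) : ℕ) : ℤ)) = SS N K h i := rfl
  rw [hfirst]
  congr 1
  -- second sum equals SS N K (h+1) (i+1)
  rw [← Finset.Ioc_insert_left hiN, Finset.sum_insert (by simp)]
  have hzero : (-1 : ℤ) ^ i * (((N + K + i).choose K : ℕ) : ℤ) * (((2 * N + K + 1).choose (N - i) : ℕ) : ℤ) *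
      (((N + i).choose (i + h + 1) : ℕ) : ℤ) * icho ((n : ℤ) - k + i) ((i : ℤ) - i - 1) = 0 := by
    have h1 : ((i : ℤ) - i - 1) = -1 := by ring
    have h2 : icho ((n : ℤ) - k + i) (-1) = 0 := by
      apply icho_neg_one
      rw [hnk]
      positivity
    rw [h1, h2]
    ring
  rw [hzero, zero_add, ← Finset.Icc_add_one_left_eq_Ioc]
  unfold SS
  refine Finset.sum_congr rfl fun j hj => ?_
  rw [Finset.mem_Icc] at hj
  have hji : i + 1 ≤ j := hj.1
  have hicho : icho ((n : ℤ) - k + j) ((j : ℤ) - i - 1) = (((N + j).choose (j - (i + 1)) : ℕ) : ℤ) := by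
    have h1 : ((n : ℤ) - k + j) = (((N + j : ℕ)) : ℤ) := by rw [hnk]; push_cast; ring
    have h2 : ((j : ℤ) - i - 1) = (((j - (i + 1) : ℕ)) : ℤ) := by
      rw [Nat.cast_sub hji]
      push_cast
      ring
    rw [h1, h2, icho_nat _ _ (by omega)]
  rw [hicho]
  have h3 : j + h + 1 = j + (h + 1) := by omega
  rw [h3]
  try ring

theorem relDi (n k h i : ℕ) (hih : i < h) (hh : h ≤ n - k) (hk2 : 2 ≤ k) :
    ((n : ℤ) + i) * ((i : ℤ) + h + 2) * D n k h i =
      -(((h : ℤ) + i + 1) * ((n : ℤ) - k + i + 2) * D n k h (i + 1)) := by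
  have hNpos : 1 ≤ n - k := le_trans (by omega) hh
  have hkn : k < n := by omega
  set N := n - k with hN
  set K := k - 1 with hK
  have hn : n = N + K + 1 := by omega
  have hd1 : D n k h i = SS N K h i - SS N K (h + 1) (i + 1) := D_eq n k h i hk2 hkn (by omega)
  have hd2 : D n k h (i + 1) = SS N K h (i + 1) - SS N K (h + 1) (i + 2) := D_eq n k h (i + 1) hk2 hkn (by omega)
  have hcn : (n : ℤ) = (N : ℤ) + K + 1 := by exact_mod_cast congrArg (Nat.cast : ℕ → ℤ) hn
  have hck : (n : ℤ) - k = (N : ℤ) := (Nat.cast_sub (le_of_lt hkn)).symm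
  rw [hd1, hd2, hck, hcn]
  set a := SS N K h i
  set b := SS N K h (i + 1)
  set c := SS N K (h + 1) (i + 1)
  set d := SS N K (h + 1) (i + 2)
  have R1 := Ri N K h i hih hh
  rcases lt_or_eq_of_le hh with hlt | heq
  · have R2 := Rh N K h (i + 1) (by omega) hlt
    have R3 := Ri N K (h + 1) (i + 1) (by omega) (by omega)
    -- cast cleanups
    have hsub : ((N - h : ℕ) : ℤ) = (N : ℤ) - h := Nat.cast_sub (le_of_lt hlt)
    have hsub2 : ((N - h + K : ℕ) : ℤ) = (N : ℤ) - h + K := by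
      push_cast [Nat.cast_sub (le_of_lt hlt)]
      ring
    rw [hsub, hsub2] at R2
    have hm : ((N : ℤ) + i + 1) * ((N : ℤ) - h + K) ≠ 0 := by
      have h1 : (0 : ℤ) < (N : ℤ) + i + 1 := by positivity
      have h2 : (0 : ℤ) < (N : ℤ) - h + K := by
        have : (h : ℤ) < N := by exact_mod_cast hlt
        have : (0 : ℤ) ≤ (K : ℤ) := by positivity
        omega
      positivity
    have hbig : (((N : ℤ) + i + 1) * ((N : ℤ) - h + K)) *
        ((((N : ℤ) + K + 1) + i) * ((i : ℤ) + h + 2) * (a - c) +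
          (((h : ℤ) + i + 1) * ((N : ℤ) + i + 2) * (b - d))) = 0 := by
      push_cast at R1 R2 R3 ⊢
      linear_combination (((i : ℤ) + h + 2) * (((N : ℤ) + i + 1) * ((N : ℤ) - h + K))) * R1
        - (((N : ℤ) + i + 1) * ((N : ℤ) - h + K)) * R2
        - (((h : ℤ) + i + 1) * (((N : ℤ) + i + 1) * ((N : ℤ) - h + K))) * R3
    have := (mul_eq_zero.mp hbig).resolve_left hm
    linarith [this]
  · have hc0 : c = 0 := by
      rw [show c = SS N K (h + 1) (i + 1) from rfl]
      exact SStop N K (h + 1) (i + 1) (by omega)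
    have hd0 : d = 0 := by
      rw [show d = SS N K (h + 1) (i + 2) from rfl]
      exact SStop N K (h + 1) (i + 2) (by omega)
    rw [hc0, hd0]
    have hheq : (h : ℤ) = (N : ℤ) := by exact_mod_cast heq
    push_cast at R1 ⊢
    linear_combination (((i : ℤ) + h + 2)) * R1 + (SS N K h (i + 1)) * hheq
end

section
/- For nonnegative integers m and parameters α, γ in a field of characteristic zero with (γ)_m·(γ-α-β)_m ≠ 0: the Pfaff–Saalschütz identity Σ_{j=0}^{m} ((-m)_j (α)_j (β)_j) / ((γ)_j (α+β-γ-m+1)_j · j!) = ((γ-α)_m (γ-β)_m) / ((γ)_m (γ-α-β)_m), where (x)_j = x(x+1)⋯(x+j-1) is the Pochhammer symbol. -/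
noncomputable def poch {F : Type*} [CommRing F] (x : F) (j : ℕ) : F :=
  (ascPochhammer F j).eval x

section Helpers
variable {F : Type*} [CommRing F]

lemma poch_zero (x : F) : poch x 0 = 1 := by simp [poch]

lemma poch_one (x : F) : poch x 1 = x := by simp [poch, ascPochhammer_one]

lemma poch_succ (x : F) (n : ℕ) : poch x (n + 1) = poch x n * (x + n) := by
  simp [poch, ascPochhammer_succ_eval]

lemma poch_succ_left (x : F) (n : ℕ) : poch x (n + 1) = x * poch (x + 1) n := by
  simp only [poch, ascPochhammer_succ_left, Polynomial.eval_mul, Polynomial.eval_X,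
    Polynomial.eval_comp, Polynomial.eval_add, Polynomial.eval_one]

lemma poch_add (x : F) (n k : ℕ) : poch x (n + k) = poch x n * poch (x + n) k := by
  rw [poch, ← ascPochhammer_mul]
  simp [poch, Polynomial.eval_comp]

lemma poch_reflect (x : F) (n : ℕ) : poch x n = (-1) ^ n * poch (-x - n + 1) n := by
  induction n generalizing x with
  | zero => simp [poch_zero]
  | succ n ih =>
      have ha : (-x - ((n : ℕ) + 1 : ℕ) + 1 + 1 : F) = -x - n + 1 := by push_cast; ring
      rw [poch_succ, ih x, poch_succ_left, ha, pow_succ]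
      push_cast
      ring

lemma poch_neg_nat (m j : ℕ) : poch (-(m : F)) j = (-1) ^ j * (j.factorial : F) * (m.choose j : F) := by
  induction j with
  | zero => simp [poch_zero]
  | succ j ih =>
      have key : (j.factorial : F) * (m.choose j : F) * ((m : F) - j) =
          ((j+1).factorial : F) * (m.choose (j+1) : F) := by
        rcases le_or_gt j m with h | h
        · have hc : ((m - j : ℕ) : F) = (m : F) - j := by push_cast [Nat.cast_sub h]; ring
          have hn := Nat.choose_succ_right_eq m j
          have hF : ((m.choose (j+1) : ℕ) * (j+1) : ℕ) = ((m.choose j) * (m - j) : ℕ) := hn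
          have hF2 : ((m.choose (j+1) : F)) * ((j : F)+1) = (m.choose j : F) * ((m : F) - j) := by
            rw [← hc]; exact_mod_cast congrArg (Nat.cast : ℕ → F) hF
          rw [Nat.factorial_succ]
          push_cast
          linear_combination (-(j.factorial : F)) * hF2
        · have h1 : m.choose j = 0 := Nat.choose_eq_zero_of_lt h
          have h2 : m.choose (j+1) = 0 := Nat.choose_eq_zero_of_lt (by omega)
          simp [h1, h2]
      rw [poch_succ, ih, pow_succ]
      push_cast
      linear_combination (-(-1:F)^j) * key

end Helpers

section Main
variable {F : Type*} [Field F] [CharZero F]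

/-- The cleared-denominator Saalschütz summand. -/
noncomputable def Tm (α β γ : F) (m j : ℕ) : F :=
  (-1) ^ j * (m.choose j : F) * poch α j * poch β j *
    poch (γ + j) (m - j) * poch (α + β - γ - (m : F) + 1 + j) (m - j)

/-- The WZ-certificate partner. -/
noncomputable def Gm (α β γ : F) (m j : ℕ) : F :=
  (-1) ^ j * ((m + 1).choose j : F) * (j : F) *
    (-(γ + (j : F) - 1) * (α + β - γ - (m : F) + 1 + j - 1)) * poch α j * poch β j *
    poch (γ + j) (m - j) * poch (α + β - γ - (m : F) + 1 + j) (m - j)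

lemma step (α β γ : F) (m j : ℕ) (h : j < m) :
    ((m : F) + 1) * Tm α β γ (m + 1) j
      + ((m : F) + 1) * ((γ - α + m) * (γ - β + m)) * Tm α β γ m j
    = Gm α β γ m (j + 1) - Gm α β γ m j := by
  obtain ⟨k, rfl⟩ : ∃ k, m = j + k + 1 := ⟨m - j - 1, by omega⟩
  simp only [Tm, Gm]
  rw [show j + k + 1 - j = k + 1 from by omega,
      show j + k + 1 + 1 - j = k + 1 + 1 from by omega,
      show j + k + 1 - (j + 1) = k from by omega]
  rw [poch_succ α j, poch_succ β j]
  rw [poch_succ (γ + (j:F)) (k+1), poch_succ_left (γ + (j:F)) k]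
  rw [show (γ + ((j:ℕ)+1:ℕ) : F) = γ + (j:F) + 1 from by push_cast; ring]
  rw [show (α + β - γ - ((j+k+1 : ℕ) : F) + 1 + ((j:ℕ)+1:ℕ) : F) = α + β - γ - (k:F) + 1
        from by push_cast; ring]
  rw [show (α + β - γ - ((j+k+1 : ℕ) : F) + 1 + (j:F) : F) = α + β - γ - (k:F)
        from by push_cast; ring]
  rw [show (α + β - γ - ((j+k+1+1 : ℕ) : F) + 1 + (j:F) : F) = α + β - γ - (k:F) - 1
        from by push_cast; ring]
  rw [poch_succ_left (α + β - γ - (k:F) - 1) (k+1)]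
  rw [show (α + β - γ - (k:F) - 1 + 1 : F) = α + β - γ - (k:F) from by ring]
  rw [poch_succ_left (α + β - γ - (k:F)) k]
  -- choose relations
  have hm0 : ((j + k + 1 + 1 : ℕ) : F) ≠ 0 := Nat.cast_ne_zero.mpr (by omega)
  have hj0 : ((j + 1 : ℕ) : F) ≠ 0 := Nat.cast_ne_zero.mpr (by omega)
  have hc0 : (((j+k+1).choose j : ℕ) : F) =
      (((j+k+1+1).choose j : ℕ) : F) * ((k:F) + 2) / (((j+k+1+1 : ℕ) : F)) := by
    rw [eq_div_iff hm0]
    have h1 := Nat.choose_mul_succ_eq (j+k+1) j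
    have h2 : j + k + 1 + 1 - j = k + 2 := by omega
    rw [h2] at h1
    exact_mod_cast congrArg (Nat.cast : ℕ → F) h1
  have hc2 : (((j+k+1+1).choose (j+1) : ℕ) : F) =
      (((j+k+1+1).choose j : ℕ) : F) * ((k:F) + 2) / (((j + 1 : ℕ) : F)) := by
    rw [eq_div_iff hj0]
    have h1 := Nat.choose_succ_right_eq (j+k+1+1) j
    have h2 : j + k + 1 + 1 - j = k + 2 := by omega
    rw [h2] at h1
    exact_mod_cast congrArg (Nat.cast : ℕ → F) h1
  rw [hc0, hc2, pow_succ]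
  push_cast at hm0 hj0 ⊢
  field_simp
  ring

lemma boundary (α β γ : F) (m : ℕ) :
    (((m : F) + 1) * Tm α β γ (m + 1) m
        + ((m : F) + 1) * ((γ - α + m) * (γ - β + m)) * Tm α β γ m m)
      + (((m : F) + 1) * Tm α β γ (m + 1) (m + 1)
        + ((m : F) + 1) * ((γ - α + m) * (γ - β + m)) * Tm α β γ m (m + 1))
    = (Gm α β γ m (m + 1) - Gm α β γ m m) + (Gm α β γ m (m + 1 + 1) - Gm α β γ m (m + 1)) := by
  simp only [Tm, Gm]
  rw [show m + 1 - m = 1 from by omega, show m - m = 0 from by omega,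
      show m + 1 - (m + 1) = 0 from by omega, show m - (m + 1) = 0 from by omega,
      show m - (m + 1 + 1) = 0 from by omega]
  simp only [Nat.choose_self, Nat.choose_succ_self, Nat.choose_succ_self_right,
    show (m + 1).choose (m + 1 + 1) = 0 from Nat.choose_eq_zero_of_lt (by omega)]
  simp only [poch_zero, poch_one]
  rw [poch_succ α m, poch_succ β m]
  push_cast
  ring

lemma sum_step (α β γ : F) (m : ℕ) :
    ∑ j ∈ Finset.range (m + 1 + 1), Tm α β γ (m + 1) j
      = -((γ - α + m) * (γ - β + m)) * ∑ j ∈ Finset.range (m + 1), Tm α β γ m j := by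
  have htel : ∑ j ∈ Finset.range (m + 1 + 1), (Gm α β γ m (j + 1) - Gm α β γ m j)
      = Gm α β γ m (m + 1 + 1) - Gm α β γ m 0 := Finset.sum_range_sub _ _
  have hG0 : Gm α β γ m 0 = 0 := by simp [Gm]
  have hGtop : Gm α β γ m (m + 1 + 1) = 0 := by
    simp [Gm, Nat.choose_eq_zero_of_lt (show m + 1 < m + 1 + 1 from by omega)]
  have hTtop : Tm α β γ m (m + 1) = 0 := by
    simp [Tm, Nat.choose_eq_zero_of_lt (show m < m + 1 from by omega)]
  have key : ∑ j ∈ Finset.range (m + 1 + 1),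
      (((m : F) + 1) * Tm α β γ (m + 1) j
        + ((m : F) + 1) * ((γ - α + m) * (γ - β + m)) * Tm α β γ m j)
      = ∑ j ∈ Finset.range (m + 1 + 1), (Gm α β γ m (j + 1) - Gm α β γ m j) := by
    rw [Finset.sum_range_succ, Finset.sum_range_succ,
        Finset.sum_range_succ (f := fun j => Gm α β γ m (j + 1) - Gm α β γ m j),
        Finset.sum_range_succ (f := fun j => Gm α β γ m (j + 1) - Gm α β γ m j)]
    have hmid : ∑ j ∈ Finset.range m,
        (((m : F) + 1) * Tm α β γ (m + 1) j
          + ((m : F) + 1) * ((γ - α + m) * (γ - β + m)) * Tm α β γ m j)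
        = ∑ j ∈ Finset.range m, (Gm α β γ m (j + 1) - Gm α β γ m j) :=
      Finset.sum_congr rfl fun j hj => step α β γ m j (Finset.mem_range.mp hj)
    rw [hmid]
    linear_combination boundary α β γ m
  rw [htel, hG0, hGtop, Finset.sum_add_distrib, ← Finset.mul_sum, ← Finset.mul_sum,
    Finset.sum_range_succ (f := fun j => Tm α β γ m j), hTtop, add_zero] at key
  have hm1 : ((m : F) + 1) ≠ 0 := by
    have : ((m + 1 : ℕ) : F) ≠ 0 := Nat.cast_ne_zero.mpr (by omega)
    push_cast at this; exact this
  have key2 : ((m : F) + 1) * (∑ j ∈ Finset.range (m + 1 + 1), Tm α β γ (m + 1) j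
      + ((γ - α + m) * (γ - β + m)) * ∑ j ∈ Finset.range (m + 1), Tm α β γ m j) = 0 := by
    linear_combination key
  rcases mul_eq_zero.mp key2 with h | h
  · exact absurd h hm1
  · linear_combination h

lemma poly_id (α β γ : F) (m : ℕ) :
    ∑ j ∈ Finset.range (m + 1), Tm α β γ m j
      = (-1) ^ m * poch (γ - α) m * poch (γ - β) m := by
  induction m with
  | zero => simp [Tm, poch_zero]
  | succ m ih =>
      rw [sum_step α β γ m, ih, poch_succ (γ - α) m, poch_succ (γ - β) m, pow_succ]
      ring

end Main

theorem pfaff_saalschutz (F : Type*) [Field F] [CharZero F] (m : ℕ) (α β γ : F)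
    (hγ : ∀ j ≤ m, poch γ j ≠ 0)
    (hδ : ∀ j ≤ m, poch (α + β - γ - (m : F) + 1) j ≠ 0)
    (hden : poch γ m * poch (γ - α - β) m ≠ 0) :
    ∑ j ∈ Finset.range (m + 1),
        (poch (-(m : F)) j * poch α j * poch β j) /
          (poch γ j * poch (α + β - γ - (m : F) + 1) j * (j.factorial : F)) =
      (poch (γ - α) m * poch (γ - β) m) / (poch γ m * poch (γ - α - β) m) := by
  obtain ⟨hγm, -⟩ := mul_ne_zero_iff.mp hden
  have hδm : poch (α + β - γ - (m : F) + 1) m ≠ 0 := hδ m le_rfl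
  have hterm : ∀ j ∈ Finset.range (m + 1),
      (poch (-(m : F)) j * poch α j * poch β j) /
          (poch γ j * poch (α + β - γ - (m : F) + 1) j * (j.factorial : F))
        = Tm α β γ m j / (poch γ m * poch (α + β - γ - (m : F) + 1) m) := by
    intro j hj
    have hjm : j ≤ m := Nat.lt_succ_iff.mp (Finset.mem_range.mp hj)
    have h1 : poch γ j ≠ 0 := hγ j hjm
    have h2 : poch (α + β - γ - (m : F) + 1) j ≠ 0 := hδ j hjm
    obtain ⟨l, rfl⟩ : ∃ l, m = j + l := ⟨m - j, by omega⟩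
    rw [Tm, show j + l - j = l from by omega, poch_neg_nat (j + l) j,
      poch_add γ j l, poch_add (α + β - γ - ((j + l : ℕ) : F) + 1) j l]
    have h3 : poch (γ + j) l ≠ 0 := by
      rw [poch_add γ j l] at hγm; exact (mul_ne_zero_iff.mp hγm).2
    have h4 : poch (α + β - γ - ((j + l : ℕ) : F) + 1 + j) l ≠ 0 := by
      rw [poch_add (α + β - γ - ((j + l : ℕ) : F) + 1) j l] at hδm
      exact (mul_ne_zero_iff.mp hδm).2
    have h5 : (j.factorial : F) ≠ 0 := Nat.cast_ne_zero.mpr (Nat.factorial_ne_zero j)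
    rw [div_eq_div_iff (mul_ne_zero (mul_ne_zero h1 h2) h5)
      (mul_ne_zero (mul_ne_zero h1 h3) (mul_ne_zero h2 h4))]
    ring
  rw [Finset.sum_congr rfl hterm, ← Finset.sum_div, poly_id α β γ m]
  have hrefl : poch (γ - α - β) m = (-1) ^ m * poch (α + β - γ - (m : F) + 1) m := by
    rw [poch_reflect (γ - α - β) m]
    congr 2
    ring
  rw [hrefl]
  have hs : ((-1 : F) ^ m) * ((-1 : F) ^ m) = 1 := by
    rw [← pow_add, ← two_mul, pow_mul]; norm_num
  have hne1 : poch γ m * poch (α + β - γ - (m : F) + 1) m ≠ 0 := mul_ne_zero hγm hδm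
  have hne2 : poch γ m * ((-1 : F) ^ m * poch (α + β - γ - (m : F) + 1) m) ≠ 0 :=
    mul_ne_zero hγm (mul_ne_zero (pow_ne_zero _ (by norm_num)) hδm)
  rw [div_eq_div_iff hne1 hne2]
  linear_combination (poch (γ - α) m * poch (γ - β) m * poch γ m
    * poch (α + β - γ - (m : F) + 1) m) * hs
end
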